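/- arXiv:1212.1346 — 6 statements merged into one kernel-verified Lean document; each statement's English description precedes it below -/
import Mathlib

section
/- For every nondeterministic finite automaton A with n states over an alphabet Σ of m letters, there exists a nondeterministic finite automaton with at most n(m+1)+1 states accepting exactly the nonunary part of L(A), i.e., the set of all nonunary words belonging to L(A). -/
/-- A word is unary if all of its letters are equal to one single letter
(the empty word is unary). -/
def IsUnaryWord {α : Type*} (w : List α) : Prop :=
  ∀ c ∈ w, ∀ c' ∈ w, c = c'

lemma isUnary_append_singleton {α : Type*} (w : List α) (b : α) :
    IsUnaryWord (w ++ [b]) ↔ ∀ c ∈ w, c = b := by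
  constructor
  · intro h c hc
    exact h c (by simp [hc]) b (by simp)
  · intro h c hc c' hc'
    have hb : ∀ x ∈ w ++ [b], x = b := by
      intro x hx
      rcases List.mem_append.1 hx with h1 | h1
      · exact h x h1
      · simpa using h1
    rw [hb c hc, hb c' hc']

/-- For every NFA `A` with `n` states over an alphabet of `m` letters,
there exists an NFA with at most `n*(m+1)+1` states accepting exactly the nonunary part
of `L(A)`, i.e., the set of all nonunary words belonging to `L(A)`. -/
theorem nfa_nonunary_part (α σ : Type) [Fintype α] [Fintype σ] (m n : ℕ)
    (hα : Fintype.card α = m) (hσ : Fintype.card σ = n) (A : NFA α σ) :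
    ∃ (σ' : Type) (_ : Fintype σ') (B : NFA α σ'),
      Fintype.card σ' ≤ n * (m + 1) + 1 ∧
      B.accepts = {w | w ∈ A.accepts ∧ ¬ IsUnaryWord w} := by
  classical
  set B : NFA α (Option (σ × Option α)) :=
    { step := fun q b =>
        match q with
        | none => (fun t => some (t, some b)) '' (A.stepSet A.start b)
        | some (s, some a) =>
            if b = a then (fun t => some (t, some a)) '' (A.step s b)
            else (fun t => some (t, (none : Option α))) '' (A.step s b)
        | some (s, none) => (fun t => some (t, (none : Option α))) '' (A.step s b) ,
      start := {none},
      accept := {q | ∃ s ∈ A.accept, q = some (s, none)} } with hB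
  have hevalnil : B.eval [] = {none} := rfl
  have hevalnilA : A.eval [] = A.start := rfl
  have key : ∀ w : List α,
      ((none : Option (σ × Option α)) ∈ B.eval w ↔ w = []) ∧
      (∀ s a, some (s, some a) ∈ B.eval w ↔
        (s ∈ A.eval w ∧ w ≠ [] ∧ ∀ c ∈ w, c = a)) ∧
      (∀ s, some (s, (none : Option α)) ∈ B.eval w ↔
        (s ∈ A.eval w ∧ ¬ IsUnaryWord w)) := by
    intro w
    induction w using List.reverseRecOn with
    | nil =>
      refine ⟨by simp [hevalnil], ?_, ?_⟩
      · intro s a; simp [hevalnil]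
      · intro s; simp [hevalnil, IsUnaryWord]
    | append_singleton w b ih =>
      obtain ⟨ih0, ih1, ih2⟩ := ih
      have hne : w ++ [b] ≠ [] := by simp
      have hev : ∀ q, q ∈ B.eval (w ++ [b]) ↔ ∃ p ∈ B.eval w, q ∈ B.step p b := by
        intro q; rw [NFA.eval_append_singleton, NFA.mem_stepSet]
      have hevA : ∀ s, s ∈ A.eval (w ++ [b]) ↔ ∃ t ∈ A.eval w, s ∈ A.step t b := by
        intro s; rw [NFA.eval_append_singleton, NFA.mem_stepSet]
      refine ⟨?_, ?_, ?_⟩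
      · rw [hev]
        simp only [hne, iff_false]
        rintro ⟨p, hp, hstep⟩
        match p with
        | none => simp [hB] at hstep
        | some (t, some a) =>
          simp only [hB] at hstep
          split at hstep <;> simp at hstep
        | some (t, none) => simp [hB] at hstep
      · intro s a
        rw [hev]
        constructor
        · rintro ⟨p, hp, hstep⟩
          match p with
          | none =>
            have hw : w = [] := ih0.1 hp
            simp only [hB, Set.mem_image] at hstep
            obtain ⟨t, ht, heq⟩ := hstep
            have h1 : t = s := by cases heq; rfl
            have h2 : b = a := by cases heq; rfl
            subst hw
            refine ⟨?_, hne, by intro c hc; simp at hc; rw [hc, h2]⟩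
            rw [hevA]
            rw [NFA.mem_stepSet] at ht
            obtain ⟨u, hu, hsu⟩ := ht
            exact ⟨u, by simpa [hevalnilA] using hu, h1 ▸ hsu⟩
          | some (t, some a') =>
            simp only [hB] at hstep
            split at hstep
            next hba =>
              simp only [Set.mem_image] at hstep
              obtain ⟨u, hu, heq⟩ := hstep
              have h1 : u = s := by cases heq; rfl
              have h2 : a' = a := by cases heq; rfl
              obtain ⟨htA, -, hall⟩ := (ih1 t a').1 hp
              refine ⟨(hevA s).2 ⟨t, htA, h1 ▸ hu⟩, hne, ?_⟩
              intro c hc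
              rcases List.mem_append.1 hc with hc1 | hc1
              · exact h2 ▸ hall c hc1
              · simp at hc1; rw [hc1, hba, h2]
            next => simp at hstep
          | some (t, none) => simp [hB] at hstep
        · rintro ⟨hs, -, hall⟩
          have hba : b = a := hall b (by simp)
          have hallw : ∀ c ∈ w, c = a := fun c hc => hall c (by simp [hc])
          obtain ⟨t, ht, hst⟩ := (hevA s).1 hs
          rcases eq_or_ne w [] with rfl | hwne
          · refine ⟨none, ih0.2 rfl, ?_⟩
            simp only [hB, Set.mem_image]
            refine ⟨s, ?_, by rw [hba]⟩
            rw [NFA.mem_stepSet]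
            exact ⟨t, by simpa [hevalnilA] using ht, hst⟩
          · refine ⟨some (t, some a), (ih1 t a).2 ⟨ht, hwne, hallw⟩, ?_⟩
            simp only [hB, if_pos hba, Set.mem_image]
            exact ⟨s, hst, rfl⟩
      · intro s
        rw [hev]
        constructor
        · rintro ⟨p, hp, hstep⟩
          match p with
          | none => simp [hB] at hstep
          | some (t, some a') =>
            simp only [hB] at hstep
            split at hstep
            next => simp at hstep
            next hba =>
              simp only [Set.mem_image] at hstep
              obtain ⟨u, hu, heq⟩ := hstep
              have h1 : u = s := by cases heq; rfl
              obtain ⟨htA, hwne, hall⟩ := (ih1 t a').1 hp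
              refine ⟨(hevA s).2 ⟨t, htA, h1 ▸ hu⟩, ?_⟩
              rw [isUnary_append_singleton]
              intro hcon
              obtain ⟨c, hc⟩ := List.exists_mem_of_ne_nil w hwne
              exact hba ((hcon c hc).symm.trans (hall c hc))
          | some (t, none) =>
            simp only [hB, Set.mem_image] at hstep
            obtain ⟨u, hu, heq⟩ := hstep
            have h1 : u = s := by cases heq; rfl
            rw [h1] at hu
            obtain ⟨htA, hnu⟩ := (ih2 t).1 hp
            refine ⟨(hevA s).2 ⟨t, htA, hu⟩, ?_⟩
            intro hcon
            exact hnu (fun c hc c' hc' => hcon c (by simp [hc]) c' (by simp [hc']))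
        · rintro ⟨hs, hnu⟩
          rw [isUnary_append_singleton] at hnu
          push_neg at hnu
          obtain ⟨c, hc, hcb⟩ := hnu
          obtain ⟨t, ht, hst⟩ := (hevA s).1 hs
          by_cases hw : IsUnaryWord w
          · have hall : ∀ c' ∈ w, c' = c := fun c' hc' => hw c' hc' c hc
            have hwne : w ≠ [] := by rintro rfl; simp at hc
            refine ⟨some (t, some c), (ih1 t c).2 ⟨ht, hwne, hall⟩, ?_⟩
            simp only [hB, if_neg (show ¬ b = c from fun h => hcb h.symm), Set.mem_image]
            exact ⟨s, hst, rfl⟩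
          · refine ⟨some (t, none), (ih2 t).2 ⟨ht, hw⟩, ?_⟩
            simp only [hB, Set.mem_image]
            exact ⟨s, hst, rfl⟩
  refine ⟨Option (σ × Option α), inferInstance, B, ?_, ?_⟩
  · simp [Fintype.card_option, Fintype.card_prod, hα, hσ]
  · ext w
    simp only [NFA.accepts, Set.mem_setOf_eq]
    constructor
    · rintro ⟨q, hq, hqe⟩
      obtain ⟨s, hsacc, rfl⟩ := hq
      obtain ⟨hsA, hnu⟩ := ((key w).2.2 s).1 hqe
      exact ⟨⟨s, hsacc, hsA⟩, hnu⟩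
    · rintro ⟨⟨s, hsacc, hsA⟩, hnu⟩
      exact ⟨some (s, none), ⟨s, hsacc, rfl⟩, ((key w).2.2 s).2 ⟨hsA, hnu⟩⟩
end

section
/- For every deterministic finite automaton A with n states over an alphabet Σ of m letters, there exists a deterministic finite automaton with at most n(m+1)+1 states accepting exactly the nonunary part of L(A), i.e., the set of all nonunary words belonging to L(A). -/
section Aux

variable {α σ : Type} (A : DFA α σ)

open Classical in
/-- Auxiliary DFA: tracks the state of `A` together with a tag:
`some a` means all letters read so far are equal to `a`, `none` means nonunary;
the extra `Unit` state is the start state (empty word read). -/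
noncomputable def nonunaryDFA : DFA α (σ × Option α ⊕ Unit) where
  start := Sum.inr ()
  step s a :=
    match s with
    | Sum.inr _ => Sum.inl (A.step A.start a, some a)
    | Sum.inl (q, t) =>
        Sum.inl (A.step q a,
          match t with
          | some b => if a = b then some b else none
          | none => none)
  accept := {s | ∃ q, s = Sum.inl (q, none) ∧ q ∈ A.accept}

lemma nonunaryDFA_eval_none (q : σ) (w : List α) :
    (nonunaryDFA A).evalFrom (Sum.inl (q, none)) w = Sum.inl (A.evalFrom q w, none) := by
  induction w generalizing q with
  | nil => rfl
  | cons a w ih =>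
      simp only [DFA.evalFrom, List.foldl_cons] at *
      exact ih (A.step q a)

lemma nonunaryDFA_eval_some_pos (q : σ) (a : α) (w : List α) (hw : ∀ c ∈ w, c = a) :
    (nonunaryDFA A).evalFrom (Sum.inl (q, some a)) w = Sum.inl (A.evalFrom q w, some a) := by
  induction w generalizing q with
  | nil => rfl
  | cons b w ih =>
      have hb : b = a := hw b (List.mem_cons_self)
      subst hb
      simp only [DFA.evalFrom, List.foldl_cons] at *
      have hstep : (nonunaryDFA A).step (Sum.inl (q, some b)) b
          = Sum.inl (A.step q b, some b) := by
        simp [nonunaryDFA]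
      rw [hstep]
      exact ih (A.step q b) (fun c hc => hw c (List.mem_cons_of_mem _ hc))

lemma nonunaryDFA_eval_some_neg (q : σ) (a : α) (w : List α) (hw : ¬ ∀ c ∈ w, c = a) :
    (nonunaryDFA A).evalFrom (Sum.inl (q, some a)) w = Sum.inl (A.evalFrom q w, none) := by
  induction w generalizing q with
  | nil => exact absurd (by simp) hw
  | cons b w ih =>
      by_cases hb : b = a
      · subst hb
        have hw' : ¬ ∀ c ∈ w, c = b := fun h =>
          hw (fun c hc => by
            rcases List.mem_cons.1 hc with h1 | h1
            · exact h1
            · exact h c h1)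
        simp only [DFA.evalFrom, List.foldl_cons] at *
        have hstep : (nonunaryDFA A).step (Sum.inl (q, some b)) b
            = Sum.inl (A.step q b, some b) := by
          simp [nonunaryDFA]
        rw [hstep]
        exact ih (A.step q b) hw'
      · simp only [DFA.evalFrom, List.foldl_cons]
        have hstep : (nonunaryDFA A).step (Sum.inl (q, some a)) b
            = Sum.inl (A.step q b, none) := by
          simp [nonunaryDFA, hb]
        rw [hstep]
        exact nonunaryDFA_eval_none A (A.step q b) w

end Aux

/-- For every DFA `A` with `n` states over an alphabet of `m` letters,
there exists a DFA with at most `n*(m+1)+1` states accepting exactly the nonunary part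
of `L(A)`, i.e., the set of all nonunary words belonging to `L(A)`. -/
theorem dfa_nonunary_part (α σ : Type) [Fintype α] [Fintype σ] (m n : ℕ)
    (hα : Fintype.card α = m) (hσ : Fintype.card σ = n) (A : DFA α σ) :
    ∃ (σ' : Type) (_ : Fintype σ') (B : DFA α σ'),
      Fintype.card σ' ≤ n * (m + 1) + 1 ∧
      B.accepts = {w | w ∈ A.accepts ∧ ¬ IsUnaryWord w} := by
  classical
  refine ⟨σ × Option α ⊕ Unit, inferInstance, nonunaryDFA A, ?_, ?_⟩
  · simp [hα, hσ]
  · ext w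
    simp only [DFA.mem_accepts, Set.mem_setOf_eq]
    cases w with
    | nil =>
        constructor
        · intro h
          obtain ⟨q, hq, _⟩ := h
          exact absurd hq (by simp [nonunaryDFA, DFA.eval, DFA.evalFrom])
        · rintro ⟨_, h⟩
          exact absurd (fun c hc c' hc' => by simp at hc) h
    | cons a w =>
        have hiu : IsUnaryWord (a :: w) ↔ ∀ c ∈ w, c = a := by
          constructor
          · intro h c hc
            exact h c (List.mem_cons_of_mem _ hc) a (List.mem_cons_self)
          · intro h c hc c' hc'
            have hc2 : c = a := by rcases List.mem_cons.1 hc with h1 | h1; exact h1; exact h c h1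
            have hc2' : c' = a := by
              rcases List.mem_cons.1 hc' with h1 | h1; exact h1; exact h c' h1
            rw [hc2, hc2']
        have hstep0 : (nonunaryDFA A).step (Sum.inr ()) a
            = Sum.inl (A.step A.start a, some a) := rfl
        by_cases hu : ∀ c ∈ w, c = a
        · have hev : (nonunaryDFA A).eval (a :: w)
              = Sum.inl (A.eval (a :: w), some a) := by
            show (nonunaryDFA A).evalFrom (Sum.inr ()) (a :: w) = _
            simp only [DFA.evalFrom, List.foldl_cons]
            rw [show List.foldl (nonunaryDFA A).step ((nonunaryDFA A).step (Sum.inr ()) a) w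
                = (nonunaryDFA A).evalFrom (Sum.inl (A.step A.start a, some a)) w from by
              rw [hstep0]; rfl]
            exact nonunaryDFA_eval_some_pos A _ a w hu
          constructor
          · intro h
            obtain ⟨q, hq, _⟩ := h
            rw [hev] at hq
            simp at hq
          · rintro ⟨_, hnu⟩
            exact absurd (hiu.2 hu) hnu
        · have hev : (nonunaryDFA A).eval (a :: w)
              = Sum.inl (A.eval (a :: w), none) := by
            show (nonunaryDFA A).evalFrom (Sum.inr ()) (a :: w) = _
            simp only [DFA.evalFrom, List.foldl_cons]
            rw [show List.foldl (nonunaryDFA A).step ((nonunaryDFA A).step (Sum.inr ()) a) w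
                = (nonunaryDFA A).evalFrom (Sum.inl (A.step A.start a, some a)) w from by
              rw [hstep0]; rfl]
            exact nonunaryDFA_eval_some_neg A _ a w hu
          constructor
          · intro h
            obtain ⟨q, hq, haq⟩ := h
            rw [hev] at hq
            injection hq with hq
            have : A.eval (a :: w) = q := (Prod.mk.injEq _ _ _ _ ▸ hq).1
            exact ⟨this ▸ haq, fun hh => hu (hiu.1 hh)⟩
          · rintro ⟨hacc, _⟩
            exact ⟨A.eval (a :: w), hev, hacc⟩
end

section
/- For every context-free grammar G in Chomsky normal form with h variables over a terminal alphabet Σ of m letters, there exists a context-free grammar in Chomsky normal form with at most mh−m+1 variables generating exactly the nonunary part of L(G), i.e., the set of all nonunary words belonging to L(G). -/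
/-- A context-free grammar is in Chomsky normal form if every production has one of the
forms `B → CD` (with `C, D` different from the start variable), `B → a`, or `S → ε`. -/
def IsCNF {T : Type*} (G : ContextFreeGrammar T) : Prop :=
  ∀ r ∈ G.rules,
    (∃ a : T, r.output = [Symbol.terminal a]) ∨
    (∃ C D : G.NT, C ≠ G.initial ∧ D ≠ G.initial ∧
      r.output = [Symbol.nonterminal C, Symbol.nonterminal D]) ∨
    (r.input = G.initial ∧ r.output = [])

namespace CnfAux

open ContextFreeGrammar

variable {T : Type} {g : ContextFreeGrammar T}

lemma derives_split_aux {s w : List (Symbol T g.NT)} (h : g.Derives s w) :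
    ∀ u v, s = u ++ v → ∃ w₁ w₂, w = w₁ ++ w₂ ∧ g.Derives u w₁ ∧ g.Derives v w₂ := by
  induction h using Relation.ReflTransGen.head_induction_on with
  | refl => exact fun u v hs => ⟨u, v, hs, by rfl, by rfl⟩
  | head hac hcb ih =>
    intro u v hs
    obtain ⟨r, hrmem, hr⟩ := hac
    obtain ⟨p, q, hpq, hc⟩ := hr.exists_parts
    rw [hs, List.append_assoc] at hpq
    rcases List.append_eq_append_iff.mp hpq with ⟨a', ha₁, ha₂⟩ | ⟨c', hc₁, hc₂⟩
    · obtain ⟨w₁, w₂, hw, h₁, h₂⟩ := ih u (a' ++ r.output ++ q)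
        (by rw [hc, ha₁]; simp [List.append_assoc])
      refine ⟨w₁, w₂, hw, h₁, ?_⟩
      refine Produces.trans_derives ⟨r, hrmem, ?_⟩ h₂
      rw [ha₂, ← List.append_assoc]
      exact r.rewrites_of_exists_parts a' q
    · cases c' with
      | nil =>
        simp only [List.append_nil] at hc₁
        simp only [List.nil_append] at hc₂
        obtain ⟨w₁, w₂, hw, h₁, h₂⟩ := ih u (r.output ++ q)
          (by rw [hc, hc₁]; simp [List.append_assoc])
        refine ⟨w₁, w₂, hw, h₁, ?_⟩
        refine Produces.trans_derives ⟨r, hrmem, ?_⟩ h₂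
        rw [← hc₂]
        simpa using r.rewrites_of_exists_parts [] q
      | cons x c'' =>
        simp only [List.cons_append, List.singleton_append, List.cons.injEq] at hc₂
        obtain ⟨rfl, rfl⟩ := hc₂
        obtain ⟨w₁, w₂, hw, h₁, h₂⟩ := ih (p ++ r.output ++ c'') v
          (by rw [hc]; simp [List.append_assoc])
        refine ⟨w₁, w₂, hw, ?_, h₂⟩
        refine Produces.trans_derives ⟨r, hrmem, ?_⟩ h₁
        rw [hc₁]
        simpa using r.rewrites_of_exists_parts p c''

lemma derives_append_split {u v w : List (Symbol T g.NT)}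
    (h : g.Derives (u ++ v) w) :
    ∃ w₁ w₂, w = w₁ ++ w₂ ∧ g.Derives u w₁ ∧ g.Derives v w₂ :=
  derives_split_aux h u v rfl

lemma derives_of_terminal_eq {w : List T} {v : List (Symbol T g.NT)}
    (h : g.Derives (w.map Symbol.terminal) v) : v = w.map Symbol.terminal := by
  rcases h.eq_or_head with rfl | ⟨x, ⟨r, _, hr⟩, _⟩
  · rfl
  · exfalso
    obtain ⟨p, q, hpq, -⟩ := hr.exists_parts
    have : Symbol.nonterminal r.input ∈ w.map (Symbol.terminal (N := g.NT)) := by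
      rw [hpq]; simp
    simp only [List.mem_map] at this
    obtain ⟨a, -, ha⟩ := this
    exact nomatch ha

lemma derives_first_step {A : g.NT} {w : List T}
    (h : g.Derives [Symbol.nonterminal A] (w.map Symbol.terminal)) :
    ∃ r ∈ g.rules, r.input = A ∧ g.Derives r.output (w.map Symbol.terminal) := by
  rcases h.eq_or_head with heq | ⟨x, ⟨r, hrmem, hr⟩, hrest⟩
  · exfalso
    cases w with
    | nil => simp at heq
    | cons a t => simp at heq
  · obtain ⟨p, q, hpq, hx⟩ := hr.exists_parts
    have hp : p = [] := by
      cases p with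
      | nil => rfl
      | cons y p' =>
        exfalso
        simp only [List.cons_append, List.cons.injEq] at hpq
        exact absurd hpq.2 (by simp)
    subst hp
    simp only [List.nil_append, List.singleton_append, List.cons.injEq] at hpq
    obtain ⟨h1, h2⟩ := hpq
    refine ⟨r, hrmem, by injection h1 with h'; exact h'.symm, ?_⟩
    have hxout : x = r.output := by rw [hx, ← h2]; simp
    rwa [← hxout]

/-- In a grammar where the only erasing rule is from `initial`, any string deriving `[]`
consists only of initial nonterminals. -/
lemma derives_nil_initial
    (hg : ∀ r ∈ g.rules,
      (∃ a : T, r.output = [Symbol.terminal a]) ∨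
      (∃ C D : g.NT, C ≠ g.initial ∧ D ≠ g.initial ∧
        r.output = [Symbol.nonterminal C, Symbol.nonterminal D]) ∨
      (r.input = g.initial ∧ r.output = []))
    {s : List (Symbol T g.NT)} (h : g.Derives s []) :
    ∀ x ∈ s, x = Symbol.nonterminal g.initial := by
  induction h using Relation.ReflTransGen.head_induction_on with
  | refl => intro x hx; simp at hx
  | head hac hcb ih =>
    intro x hx
    obtain ⟨r, hrmem, hr⟩ := hac
    obtain ⟨p, q, hpq, hc⟩ := hr.exists_parts
    subst hpq hc
    rcases hg r hrmem with ⟨a, hout⟩ | ⟨C, D, hC, hD, hout⟩ | ⟨hin, hout⟩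
    · exfalso
      have : Symbol.terminal a ∈ p ++ r.output ++ q := by rw [hout]; simp
      exact nomatch (ih _ this)
    · exfalso
      have : Symbol.nonterminal C ∈ p ++ r.output ++ q := by rw [hout]; simp
      have := ih _ this
      injection this with h'
      exact hC h'
    · simp only [List.append_assoc, List.mem_append, List.mem_singleton] at hx
      rcases hx with hx | hx | hx
      · exact ih x (by simp [hx])
      · rw [hx]; rw [hin]
      · exact ih x (by simp [hx])



variable {α : Type}

lemma unary_append_left {u v : List α} (h : IsUnaryWord (u ++ v)) : IsUnaryWord u :=
  fun c hc c' hc' => h c (by simp [hc]) c' (by simp [hc'])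

lemma unary_append_right {u v : List α} (h : IsUnaryWord (u ++ v)) : IsUnaryWord v :=
  fun c hc c' hc' => h c (by simp [hc]) c' (by simp [hc'])

lemma unary_of_all_eq {w : List α} {a : α} (h : ∀ c ∈ w, c = a) : IsUnaryWord w :=
  fun c hc c' hc' => (h c hc).trans (h c' hc').symm

lemma exists_all_eq_of_unary {w : List α} (hw : w ≠ []) (h : IsUnaryWord w) :
    ∃ a, ∀ c ∈ w, c = a := by
  cases w with
  | nil => exact absurd rfl hw
  | cons x t => exact ⟨x, fun c hc => h c hc x (by simp)⟩

lemma not_unary_cases {u v : List α} (hu : u ≠ []) (hv : v ≠ [])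
    {b c : α} (hub : ∀ x ∈ u, x = b) (hvc : ∀ x ∈ v, x = c) (hbc : b ≠ c) :
    ¬ IsUnaryWord (u ++ v) := by
  intro h
  obtain ⟨x, t, rfl⟩ := List.exists_cons_of_ne_nil hu
  obtain ⟨y, s, rfl⟩ := List.exists_cons_of_ne_nil hv
  have := h x (by simp) y (by simp)
  rw [hub x (by simp), hvc y (by simp)] at this
  exact hbc this

lemma choose_letters [Fintype α] (hcard : 1 < Fintype.card α) {u v : List α}
    (hu : u ≠ []) (hv : v ≠ []) (h : ¬ IsUnaryWord (u ++ v)) :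
    ∃ b c, b ≠ c ∧ ((∀ x ∈ u, x = b) ∨ ¬ IsUnaryWord u) ∧
      ((∀ x ∈ v, x = c) ∨ ¬ IsUnaryWord v) := by
  by_cases h1 : IsUnaryWord u
  · obtain ⟨b, hb⟩ := exists_all_eq_of_unary hu h1
    by_cases h2 : IsUnaryWord v
    · obtain ⟨c, hc⟩ := exists_all_eq_of_unary hv h2
      refine ⟨b, c, ?_, Or.inl hb, Or.inl hc⟩
      rintro rfl
      exact h (unary_of_all_eq (by intro x hx; rcases List.mem_append.mp hx with h' | h'
                                   exacts [hb x h', hc x h']))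
    · obtain ⟨c, hc⟩ := Fintype.exists_ne_of_one_lt_card hcard b
      exact ⟨b, c, fun e => hc e.symm, Or.inl hb, Or.inr h2⟩
  · by_cases h2 : IsUnaryWord v
    · obtain ⟨c, hc⟩ := exists_all_eq_of_unary hv h2
      obtain ⟨b, hb⟩ := Fintype.exists_ne_of_one_lt_card hcard c
      exact ⟨b, c, hb, Or.inr h1, Or.inl hc⟩
    · obtain ⟨b, c, hbc⟩ := Fintype.one_lt_card_iff.mp hcard
      exact ⟨b, c, hbc, Or.inr h1, Or.inr h2⟩

variable {g : ContextFreeGrammar α}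

open ContextFreeGrammar

universe u
variable {α : Type} [Fintype α] (G : ContextFreeGrammar α)

abbrev NTc : Type := Option ({A : G.NT // A ≠ G.initial} × α)

open scoped Classical in
noncomputable def toNT (A : G.NT) (a : α) : NTc G :=
  if h : A = G.initial then none else some (⟨A, h⟩, a)

lemma toNT_ne {A : G.NT} (h : A ≠ G.initial) (a : α) : toNT G A a = some (⟨A, h⟩, a) := by
  unfold toNT; rw [dif_neg h]

lemma toNT_init (a : α) : toNT G G.initial a = none := by
  unfold toNT; rw [dif_pos rfl]

noncomputable def out₂ (b c : α) : List (Symbol α G.NT) → List (Symbol α (NTc G))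
  | (Symbol.nonterminal C) :: (Symbol.nonterminal D) :: [] =>
      [Symbol.nonterminal (toNT G C b), Symbol.nonterminal (toNT G D c)]
  | _ => []

@[simp] lemma out₂_pair (b c : α) (C D : G.NT) :
    out₂ G b c [Symbol.nonterminal C, Symbol.nonterminal D] =
      [Symbol.nonterminal (toNT G C b), Symbol.nonterminal (toNT G D c)] := rfl

open scoped Classical in
noncomputable def newRules : Finset (ContextFreeRule α (NTc G)) :=
  ((G.rules ×ˢ (Finset.univ : Finset α)).filter
      (fun p => p.1.input ≠ G.initial ∧ p.1.output = [Symbol.terminal p.2])).image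
    (fun p => ⟨toNT G p.1.input p.2, [Symbol.terminal p.2]⟩)
  ∪
  ((G.rules ×ˢ (Finset.univ : Finset (α × α × α))).filter
      (fun p => (∃ C D, p.1.output = [Symbol.nonterminal C, Symbol.nonterminal D]) ∧
        (p.2.2.1 ≠ p.2.2.2 ∨ (p.1.input ≠ G.initial ∧ p.2.2.1 = p.2.1 ∧ p.2.2.2 = p.2.1)))).image
    (fun p => ⟨toNT G p.1.input p.2.1, out₂ G p.2.2.1 p.2.2.2 p.1.output⟩)

noncomputable abbrev Gc : ContextFreeGrammar α := ⟨NTc G, none, newRules G⟩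

lemma mem_newRules_iff {r' : ContextFreeRule α (NTc G)} :
    r' ∈ newRules G ↔
      (∃ r ∈ G.rules, ∃ a, r.input ≠ G.initial ∧ r.output = [Symbol.terminal a] ∧
        r' = ⟨toNT G r.input a, [Symbol.terminal a]⟩) ∨
      (∃ r ∈ G.rules, ∃ a b c,
        (∃ C D, r.output = [Symbol.nonterminal C, Symbol.nonterminal D]) ∧
        (b ≠ c ∨ (r.input ≠ G.initial ∧ b = a ∧ c = a)) ∧
        r' = ⟨toNT G r.input a, out₂ G b c r.output⟩) := by
  classical
  constructor
  · intro h
    rcases Finset.mem_union.mp h with h | h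
    · obtain ⟨⟨r, a⟩, hmem, rfl⟩ := Finset.mem_image.mp h
      have hf := Finset.mem_filter.mp hmem
      have hp := Finset.mem_product.mp hf.1
      exact Or.inl ⟨r, hp.1, a, hf.2.1, hf.2.2, rfl⟩
    · obtain ⟨⟨r, a, b, c⟩, hmem, rfl⟩ := Finset.mem_image.mp h
      have hf := Finset.mem_filter.mp hmem
      have hp := Finset.mem_product.mp hf.1
      exact Or.inr ⟨r, hp.1, a, b, c, hf.2.1, hf.2.2, rfl⟩
  · rintro (⟨r, hmem, a, h1, h2, rfl⟩ | ⟨r, hmem, a, b, c, h1, h2, rfl⟩)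
    · refine Finset.mem_union_left _ (Finset.mem_image.mpr ⟨⟨r, a⟩, ?_, by simp⟩)
      exact Finset.mem_filter.mpr ⟨Finset.mem_product.mpr ⟨hmem, Finset.mem_univ _⟩, h1, h2⟩
    · refine Finset.mem_union_right _ (Finset.mem_image.mpr ⟨⟨r, a, b, c⟩, ?_, by simp⟩)
      exact Finset.mem_filter.mpr ⟨Finset.mem_product.mpr ⟨hmem, Finset.mem_univ _⟩, h1, h2⟩


/-! ### Main lemmas -/

variable {G}

lemma cnf_Gc (hG : IsCNF G) : IsCNF (Gc G) := by
  intro r' hr'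
  rcases (mem_newRules_iff G).mp hr' with ⟨r, hrmem, a, h1, h2, rfl⟩ |
    ⟨r, hrmem, a, b, c, ⟨C, D, hCD⟩, hcond, rfl⟩
  · exact Or.inl ⟨a, rfl⟩
  · rcases hG r hrmem with ⟨e, he⟩ | ⟨C', D', hC', hD', hout⟩ | ⟨hin, hout⟩
    · rw [hCD] at he; simp at he
    · rw [hCD] at hout
      simp only [List.cons.injEq] at hout
      obtain ⟨hc1, hc2, -⟩ := hout
      injection hc1 with hc1; injection hc2 with hc2
      subst hc1; subst hc2
      refine Or.inr (Or.inl ⟨some (⟨C, hC'⟩, b), some (⟨D, hD'⟩, c), by simp [Gc], by simp [Gc], ?_⟩)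
      rw [hCD, out₂_pair, toNT_ne G hC', toNT_ne G hD']
    · rw [hCD] at hout; simp at hout

lemma G_nonempty (hG : IsCNF G) {A : G.NT} (hA : A ≠ G.initial) {w : List α}
    (h : G.Derives [Symbol.nonterminal A] (w.map Symbol.terminal)) : w ≠ [] := by
  rintro rfl
  simp only [List.map_nil] at h
  have := derives_nil_initial hG h (Symbol.nonterminal A) (by simp)
  injection this with h'
  exact hA h'

lemma Gc_nonempty (hG : IsCNF G) {p : {A : G.NT // A ≠ G.initial} × α} {w : List α}
    (h : (Gc G).Derives [Symbol.nonterminal (some p)] (w.map Symbol.terminal)) : w ≠ [] := by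
  rintro rfl
  simp only [List.map_nil] at h
  have := derives_nil_initial (cnf_Gc hG) h (Symbol.nonterminal (some p)) (by simp)
  injection this with h'
  exact nomatch h'

omit [Fintype α] in
lemma derives_pair {g : ContextFreeGrammar α} {X Y : g.NT} {u v : List α}
    (h1 : g.Derives [Symbol.nonterminal X] (u.map Symbol.terminal))
    (h2 : g.Derives [Symbol.nonterminal Y] (v.map Symbol.terminal)) :
    g.Derives [Symbol.nonterminal X, Symbol.nonterminal Y] ((u ++ v).map Symbol.terminal) := by
  have ha := h1.append_right [Symbol.nonterminal Y]
  have hb := h2.append_left (u.map Symbol.terminal)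
  have := ha.trans hb
  simpa using this

lemma map_eq_single_terminal {w : List α} {b : α} {N : Type*}
    (h : w.map (Symbol.terminal (N := N)) = [Symbol.terminal b]) : w = [b] := by
  cases w with
  | nil => simp at h
  | cons x t =>
    simp only [List.map_cons, List.cons.injEq] at h
    obtain ⟨h1, h2⟩ := h
    injection h1 with h1
    subst h1
    simp only [List.map_eq_nil_iff] at h2
    rw [h2]

lemma completeness_inner (hG : IsCNF G) (hcard : 1 < Fintype.card α) :
    ∀ (n : ℕ) (w : List α), w.length ≤ n → ∀ (A : G.NT) (hA : A ≠ G.initial) (a : α),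
      G.Derives [Symbol.nonterminal A] (w.map Symbol.terminal) →
      ((∀ x ∈ w, x = a) ∨ ¬ IsUnaryWord w) →
      (Gc G).Derives [Symbol.nonterminal (some (⟨A, hA⟩, a))] (w.map Symbol.terminal) := by
  intro n
  induction n with
  | zero =>
    intro w hw A hA a hder _
    exact absurd (List.length_eq_zero_iff.mp (Nat.le_zero.mp hw)) (G_nonempty hG hA hder)
  | succ n ih =>
    intro w hw A hA a hder hcond
    obtain ⟨r, hrmem, hrin, hout⟩ := derives_first_step hder
    subst hrin
    rcases hG r hrmem with ⟨b, hb⟩ | ⟨C, D, hC, hD, hCD⟩ | ⟨hin, hnil⟩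
    · rw [hb] at hout
      have hwb : w.map (Symbol.terminal (N := G.NT)) = [Symbol.terminal b] := by
        have := derives_of_terminal_eq (w := [b]) (by simpa using hout)
        simpa using this
      have hwb' : w = [b] := map_eq_single_terminal hwb
      have hba : b = a := by
        rcases hcond with hall | hnon
        · exact hall b (by simp [hwb'])
        · exact absurd (unary_of_all_eq (w := w) (a := b) (by simp [hwb'])) hnon
      subst hba
      have hmem : (⟨some (⟨r.input, hA⟩, b), [Symbol.terminal b]⟩ :
          ContextFreeRule α (NTc G)) ∈ newRules G :=
        (mem_newRules_iff G).mpr (Or.inl ⟨r, hrmem, b, hA, hb, by rw [toNT_ne G hA]⟩)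
      subst hwb'
      simpa using Produces.single
        (⟨_, hmem, ContextFreeRule.Rewrites.input_output⟩ : (Gc G).Produces _ _)
    · rw [hCD] at hout
      have hout' : G.Derives ([Symbol.nonterminal C] ++ [Symbol.nonterminal D])
          (w.map Symbol.terminal) := hout
      obtain ⟨w₁, w₂, hw12, hd1, hd2⟩ := derives_append_split hout'
      obtain ⟨u, v, rfl, rfl, rfl⟩ := List.map_eq_append_iff.mp hw12
      have hu : u ≠ [] := G_nonempty hG hC hd1
      have hv : v ≠ [] := G_nonempty hG hD hd2
      have hul : u.length ≤ n := by
        have := hw; rw [List.length_append] at this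
        have : 1 ≤ v.length := Nat.one_le_iff_ne_zero.mpr (by simpa using hv)
        omega
      have hvl : v.length ≤ n := by
        have := hw; rw [List.length_append] at this
        have : 1 ≤ u.length := Nat.one_le_iff_ne_zero.mpr (by simpa using hu)
        omega
      -- choose letters
      rcases hcond with hall | hnon
      · -- unary case : all letters equal a
        have hmem : (⟨some (⟨r.input, hA⟩, a),
            [Symbol.nonterminal (some (⟨C, hC⟩, a)), Symbol.nonterminal (some (⟨D, hD⟩, a))]⟩ :
            ContextFreeRule α (NTc G)) ∈ newRules G := by
          refine (mem_newRules_iff G).mpr (Or.inr ⟨r, hrmem, a, a, a, ⟨C, D, hCD⟩,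
            Or.inr ⟨hA, rfl, rfl⟩, ?_⟩)
          rw [hCD, out₂_pair, toNT_ne G hA, toNT_ne G hC, toNT_ne G hD]
        refine Produces.trans_derives ⟨_, hmem, ContextFreeRule.Rewrites.input_output⟩ ?_
        exact derives_pair
          (ih u hul C hC a hd1 (Or.inl fun x hx => hall x (by simp [hx])))
          (ih v hvl D hD a hd2 (Or.inl fun x hx => hall x (by simp [hx])))
      · obtain ⟨b, c, hbc, hcu, hcv⟩ := choose_letters hcard hu hv hnon
        have hmem : (⟨some (⟨r.input, hA⟩, a),
            [Symbol.nonterminal (some (⟨C, hC⟩, b)), Symbol.nonterminal (some (⟨D, hD⟩, c))]⟩ :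
            ContextFreeRule α (NTc G)) ∈ newRules G := by
          refine (mem_newRules_iff G).mpr (Or.inr ⟨r, hrmem, a, b, c, ⟨C, D, hCD⟩,
            Or.inl hbc, ?_⟩)
          rw [hCD, out₂_pair, toNT_ne G hA, toNT_ne G hC, toNT_ne G hD]
        refine Produces.trans_derives ⟨_, hmem, ContextFreeRule.Rewrites.input_output⟩ ?_
        exact derives_pair (ih u hul C hC b hd1 hcu) (ih v hvl D hD c hd2 hcv)
    · exact absurd hin hA

lemma completeness_top (hG : IsCNF G) (hcard : 1 < Fintype.card α) {w : List α}
    (hw : ¬ IsUnaryWord w)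
    (hder : G.Derives [Symbol.nonterminal G.initial] (w.map Symbol.terminal)) :
    (Gc G).Derives [Symbol.nonterminal (none : NTc G)] (w.map Symbol.terminal) := by
  obtain ⟨r, hrmem, hrin, hout⟩ := derives_first_step hder
  rcases hG r hrmem with ⟨b, hb⟩ | ⟨C, D, hC, hD, hCD⟩ | ⟨hin, hnil⟩
  · rw [hb] at hout
    have hwb : w.map (Symbol.terminal (N := G.NT)) = [Symbol.terminal b] := by
      have := derives_of_terminal_eq (w := [b]) (by simpa using hout)
      simpa using this
    have hwb' : w = [b] := map_eq_single_terminal hwb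
    exact absurd (unary_of_all_eq (w := w) (a := b) (by simp [hwb'])) hw
  · rw [hCD] at hout
    have hout' : G.Derives ([Symbol.nonterminal C] ++ [Symbol.nonterminal D])
        (w.map Symbol.terminal) := hout
    obtain ⟨w₁, w₂, hw12, hd1, hd2⟩ := derives_append_split hout'
    obtain ⟨u, v, rfl, rfl, rfl⟩ := List.map_eq_append_iff.mp hw12
    have hu : u ≠ [] := G_nonempty hG hC hd1
    have hv : v ≠ [] := G_nonempty hG hD hd2
    obtain ⟨b, c, hbc, hcu, hcv⟩ := choose_letters hcard hu hv hw
    have hmem : (⟨none,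
        [Symbol.nonterminal (some (⟨C, hC⟩, b)), Symbol.nonterminal (some (⟨D, hD⟩, c))]⟩ :
        ContextFreeRule α (NTc G)) ∈ newRules G := by
      refine (mem_newRules_iff G).mpr (Or.inr ⟨r, hrmem, b, b, c, ⟨C, D, hCD⟩,
        Or.inl hbc, ?_⟩)
      rw [hCD, out₂_pair, hrin, toNT_init, toNT_ne G hC, toNT_ne G hD]
    refine Produces.trans_derives ⟨_, hmem, ContextFreeRule.Rewrites.input_output⟩ ?_
    exact derives_pair
      (completeness_inner hG hcard u.length u le_rfl C hC b hd1 hcu)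
      (completeness_inner hG hcard v.length v le_rfl D hD c hd2 hcv)
  · rw [hnil] at hout
    have : w.map Symbol.terminal = ([] : List α).map Symbol.terminal :=
      derives_of_terminal_eq (w := []) (by simpa using hout)
    simp only [List.map_nil, List.map_eq_nil_iff] at this
    subst this
    exact absurd (fun c hc => by simp at hc) hw

lemma soundness_inner (hG : IsCNF G) :
    ∀ (n : ℕ) (w : List α), w.length ≤ n → ∀ (A : G.NT) (hA : A ≠ G.initial) (a : α),
      (Gc G).Derives [Symbol.nonterminal (some (⟨A, hA⟩, a))] (w.map Symbol.terminal) →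
      G.Derives [Symbol.nonterminal A] (w.map Symbol.terminal) ∧ w ≠ [] ∧
        ((∀ x ∈ w, x = a) ∨ ¬ IsUnaryWord w) := by
  intro n
  induction n with
  | zero =>
    intro w hw A hA a hder
    exact absurd (List.length_eq_zero_iff.mp (Nat.le_zero.mp hw)) (Gc_nonempty hG hder)
  | succ n ih =>
    intro w hw A hA a hder
    obtain ⟨r', hr'mem, hr'in, hr'out⟩ := derives_first_step hder
    rcases (mem_newRules_iff G).mp hr'mem with ⟨r, hrmem, a', hne, hro, hr'⟩ |
      ⟨r, hrmem, a', b, c, ⟨C, D, hCD⟩, hcond, hr'⟩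
    · -- terminal rule
      subst hr'
      simp only at hr'in hr'out
      rw [toNT_ne G hne] at hr'in
      rw [Option.some.injEq, Prod.mk.injEq, Subtype.mk.injEq] at hr'in
      obtain ⟨hrA, rfl⟩ := hr'in
      have hwb : w.map (Symbol.terminal (N := (Gc G).NT)) = [Symbol.terminal a'] := by
        have := derives_of_terminal_eq (g := Gc G) (w := [a']) (by simpa using hr'out)
        simpa using this
      have hwb' : w = [a'] := map_eq_single_terminal hwb
      subst hwb'
      refine ⟨?_, by simp, Or.inl (by simp)⟩
      have : G.Produces [Symbol.nonterminal r.input] r.output :=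
        ⟨r, hrmem, ContextFreeRule.Rewrites.input_output⟩
      rw [hro, hrA] at this
      simpa using this.single
    · -- branching rule
      subst hr'
      simp only at hr'in hr'out
      have hne : r.input ≠ G.initial := by
        intro heq
        rw [heq, toNT_init] at hr'in
        exact nomatch hr'in
      rw [toNT_ne G hne] at hr'in
      rw [Option.some.injEq, Prod.mk.injEq, Subtype.mk.injEq] at hr'in
      obtain ⟨hrA, rfl⟩ := hr'in
      -- identify C D as non-initial via hG
      have hCD' : C ≠ G.initial ∧ D ≠ G.initial := by
        rcases hG r hrmem with ⟨e, he⟩ | ⟨C', D', hC', hD', hout'⟩ | ⟨-, hout'⟩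
        · rw [hCD] at he; simp at he
        · rw [hCD] at hout'
          simp only [List.cons.injEq] at hout'
          obtain ⟨h1, h2, -⟩ := hout'
          injection h1 with h1; injection h2 with h2
          exact ⟨h1 ▸ hC', h2 ▸ hD'⟩
        · rw [hCD] at hout'; simp at hout'
      obtain ⟨hC, hD⟩ := hCD'
      rw [hCD, out₂_pair, toNT_ne G hC, toNT_ne G hD] at hr'out
      have hout' : (Gc G).Derives
          ([Symbol.nonterminal (some (⟨C, hC⟩, b))] ++ [Symbol.nonterminal (some (⟨D, hD⟩, c))])
          (w.map Symbol.terminal) := hr'out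
      obtain ⟨w₁, w₂, hw12, hd1, hd2⟩ := derives_append_split hout'
      obtain ⟨u, v, rfl, rfl, rfl⟩ := List.map_eq_append_iff.mp hw12
      have hu : u ≠ [] := Gc_nonempty hG hd1
      have hv : v ≠ [] := Gc_nonempty hG hd2
      have hul : u.length ≤ n := by
        have h' := hw; rw [List.length_append] at h'
        have : 1 ≤ v.length := Nat.one_le_iff_ne_zero.mpr (by simpa using hv)
        omega
      have hvl : v.length ≤ n := by
        have h' := hw; rw [List.length_append] at h'
        have : 1 ≤ u.length := Nat.one_le_iff_ne_zero.mpr (by simpa using hu)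
        omega
      obtain ⟨hgd1, -, hcu⟩ := ih u hul C hC b hd1
      obtain ⟨hgd2, -, hcv⟩ := ih v hvl D hD c hd2
      have hgder : G.Derives [Symbol.nonterminal A] ((u ++ v).map Symbol.terminal) := by
        have hstep : G.Produces [Symbol.nonterminal r.input] r.output :=
          ⟨r, hrmem, ContextFreeRule.Rewrites.input_output⟩
        rw [hCD, hrA] at hstep
        exact hstep.trans_derives (derives_pair hgd1 hgd2)
      refine ⟨hgder, by simp [hu], ?_⟩
      rcases hcond with hbc | ⟨-, rfl, rfl⟩
      · -- b ≠ c : result is nonunary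
        refine Or.inr ?_
        rcases hcu with hall1 | hnon1
        · rcases hcv with hall2 | hnon2
          · exact not_unary_cases hu hv hall1 hall2 hbc
          · exact fun h => hnon2 (unary_append_right h)
        · exact fun h => hnon1 (unary_append_left h)
      · -- b = c = a
        rcases hcu with hall1 | hnon1
        · rcases hcv with hall2 | hnon2
          · refine Or.inl ?_
            intro x hx
            rcases List.mem_append.mp hx with h' | h'
            exacts [hall1 x h', hall2 x h']
          · exact Or.inr fun h => hnon2 (unary_append_right h)
        · exact Or.inr fun h => hnon1 (unary_append_left h)

lemma soundness_top (hG : IsCNF G) {w : List α}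
    (hder : (Gc G).Derives [Symbol.nonterminal (none : NTc G)] (w.map Symbol.terminal)) :
    G.Derives [Symbol.nonterminal G.initial] (w.map Symbol.terminal) ∧ ¬ IsUnaryWord w := by
  obtain ⟨r', hr'mem, hr'in, hr'out⟩ := derives_first_step hder
  rcases (mem_newRules_iff G).mp hr'mem with ⟨r, hrmem, a', hne, hro, hr'⟩ |
    ⟨r, hrmem, a', b, c, ⟨C, D, hCD⟩, hcond, hr'⟩
  · subst hr'
    simp only at hr'in
    rw [toNT_ne G hne] at hr'in
    exact nomatch hr'in
  · subst hr'
    simp only at hr'in hr'out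
    have hinit : r.input = G.initial := by
      by_contra hne
      rw [toNT_ne G hne] at hr'in
      exact nomatch hr'in
    have hbc : b ≠ c := by
      rcases hcond with h | ⟨h, -⟩
      · exact h
      · exact absurd hinit h
    have hCD' : C ≠ G.initial ∧ D ≠ G.initial := by
      rcases hG r hrmem with ⟨e, he⟩ | ⟨C', D', hC', hD', hout'⟩ | ⟨-, hout'⟩
      · rw [hCD] at he; simp at he
      · rw [hCD] at hout'
        simp only [List.cons.injEq] at hout'
        obtain ⟨h1, h2, -⟩ := hout'
        injection h1 with h1; injection h2 with h2
        exact ⟨h1 ▸ hC', h2 ▸ hD'⟩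
      · rw [hCD] at hout'; simp at hout'
    obtain ⟨hC, hD⟩ := hCD'
    rw [hCD, out₂_pair, toNT_ne G hC, toNT_ne G hD] at hr'out
    have hout' : (Gc G).Derives
        ([Symbol.nonterminal (some (⟨C, hC⟩, b))] ++ [Symbol.nonterminal (some (⟨D, hD⟩, c))])
        (w.map Symbol.terminal) := hr'out
    obtain ⟨w₁, w₂, hw12, hd1, hd2⟩ := derives_append_split hout'
    obtain ⟨u, v, rfl, rfl, rfl⟩ := List.map_eq_append_iff.mp hw12
    have hu : u ≠ [] := Gc_nonempty hG hd1
    have hv : v ≠ [] := Gc_nonempty hG hd2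
    obtain ⟨hgd1, -, hcu⟩ := soundness_inner hG u.length u le_rfl C hC b hd1
    obtain ⟨hgd2, -, hcv⟩ := soundness_inner hG v.length v le_rfl D hD c hd2
    have hgder : G.Derives [Symbol.nonterminal G.initial] ((u ++ v).map Symbol.terminal) := by
      have hstep : G.Produces [Symbol.nonterminal r.input] r.output :=
        ⟨r, hrmem, ContextFreeRule.Rewrites.input_output⟩
      rw [hCD, hinit] at hstep
      exact hstep.trans_derives (derives_pair hgd1 hgd2)
    refine ⟨hgder, ?_⟩
    rcases hcu with hall1 | hnon1
    · rcases hcv with hall2 | hnon2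
      · exact not_unary_cases hu hv hall1 hall2 hbc
      · exact fun h => hnon2 (unary_append_right h)
    · exact fun h => hnon1 (unary_append_left h)

lemma Gc_language (hG : IsCNF G) (hcard : 1 < Fintype.card α) :
    (Gc G).language = {w | w ∈ G.language ∧ ¬ IsUnaryWord w} := by
  ext w
  change _ ↔ w ∈ G.language ∧ ¬ IsUnaryWord w
  rw [ContextFreeGrammar.mem_language_iff, ContextFreeGrammar.mem_language_iff]
  constructor
  · intro h
    obtain ⟨h1, h2⟩ := soundness_top hG h
    exact ⟨h1, h2⟩
  · rintro ⟨h1, h2⟩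
    exact completeness_top hG hcard h2 h1

/-! ### Relabeling nonterminals (universe transfer) -/

universe v

section Relabel

omit [Fintype α]

def mapSymb {N : Type*} {N' : Type*} (f : N → N') : Symbol α N → Symbol α N'
  | .terminal a => .terminal a
  | .nonterminal A => .nonterminal (f A)

@[simp] lemma mapSymb_terminal {N N' : Type*} (f : N → N') (a : α) :
    mapSymb (α := α) f (Symbol.terminal a) = Symbol.terminal a := rfl

@[simp] lemma mapSymb_nonterminal {N N' : Type*} (f : N → N') (A : N) :
    mapSymb (α := α) f (Symbol.nonterminal A) = Symbol.nonterminal (f A) := rfl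

def mapRule {N N' : Type*} (f : N → N') (r : ContextFreeRule α N) :
    ContextFreeRule α N' := ⟨f r.input, r.output.map (mapSymb f)⟩

@[simp] lemma mapSymb_map_terminal {N N' : Type*} (f : N → N') (w : List α) :
    (w.map Symbol.terminal).map (mapSymb f) = w.map Symbol.terminal := by
  rw [List.map_map]; rfl

lemma mapRule_mapRule {N N' N'' : Type*} (f : N → N') (g : N' → N'')
    (r : ContextFreeRule α N) : mapRule g (mapRule f r) = mapRule (g ∘ f) r := by
  simp only [mapRule, List.map_map]
  refine congrArg _ (List.map_congr_left fun s _ => ?_)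
  cases s <;> rfl

lemma mapRule_id' {N : Type*} (f : N → N) (hf : ∀ x, f x = x) (r : ContextFreeRule α N) :
    mapRule f r = r := by
  have hs : ∀ s : Symbol α N, mapSymb (α := α) f s = s := fun s => by cases s <;> simp [hf]
  obtain ⟨i, o⟩ := r
  simp only [mapRule, hf]
  refine congrArg _ ?_
  rw [List.map_congr_left (fun s _ => hs s)]; exact List.map_id' o

lemma derives_map {g : ContextFreeGrammar.{_} α} {g' : ContextFreeGrammar.{_} α}
    (f : g.NT → g'.NT) (hf : ∀ r ∈ g.rules, mapRule f r ∈ g'.rules)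
    {u v : List (Symbol α g.NT)} (h : g.Derives u v) :
    g'.Derives (u.map (mapSymb f)) (v.map (mapSymb f)) := by
  induction h with
  | refl => rfl
  | tail _ h2 ih =>
    obtain ⟨r, hrmem, hr⟩ := h2
    obtain ⟨p, q, rfl, rfl⟩ := hr.exists_parts
    refine ih.trans_produces ⟨mapRule f r, hf r hrmem, ?_⟩
    have := (mapRule f r).rewrites_of_exists_parts (p.map (mapSymb f)) (q.map (mapSymb f))
    simpa [mapRule] using this

end Relabel

section RelabelGrammar

omit [Fintype α]
variable (g : ContextFreeGrammar α) [Fintype g.NT]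

/-- Encoding of nonterminals into `ULift (Fin n)`. -/
noncomputable def enc : g.NT → ULift.{0} (Fin (Fintype.card g.NT)) :=
  fun A => ULift.up (Fintype.equivFin g.NT A)

noncomputable def dec : ULift.{0} (Fin (Fintype.card g.NT)) → g.NT :=
  fun x => (Fintype.equivFin g.NT).symm x.down

@[simp] lemma dec_enc (A : g.NT) : dec g (enc g A) = A := by
  simp [enc, dec]

lemma enc_injective : Function.Injective (enc g) := by
  intro x y hxy
  have := congrArg (dec g) hxy
  simpa using this

open scoped Classical in
noncomputable abbrev relabel : ContextFreeGrammar α :=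
  ⟨ULift.{0} (Fin (Fintype.card g.NT)), enc g g.initial, g.rules.image (mapRule (enc g))⟩

lemma relabel_mem_rules {r' : ContextFreeRule α (ULift.{0} (Fin (Fintype.card g.NT)))} :
    r' ∈ (relabel g).rules ↔ ∃ r ∈ g.rules, r' = mapRule (enc g) r := by
  classical
  simp only [relabel, Finset.mem_image]
  constructor
  · rintro ⟨r, hr, rfl⟩; exact ⟨r, hr, rfl⟩
  · rintro ⟨r, hr, rfl⟩; exact ⟨r, hr, rfl⟩

lemma relabel_language : (relabel g).language = g.language := by
  ext w
  rw [ContextFreeGrammar.mem_language_iff, ContextFreeGrammar.mem_language_iff]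
  constructor
  · intro hder
    have hfd : ∀ r' ∈ (relabel g).rules, mapRule (dec g) r' ∈ g.rules := by
      intro r' hr'
      obtain ⟨r, hr, rfl⟩ := (relabel_mem_rules g).mp hr'
      rw [mapRule_mapRule, mapRule_id' (dec g ∘ enc g) (fun x => dec_enc g x)]
      exact hr
    have := derives_map (g := relabel g) (g' := g) (dec g) hfd hder
    simpa [relabel, Function.comp_def] using this
  · intro hder
    have hfe : ∀ r ∈ g.rules, mapRule (enc g) r ∈ (relabel g).rules :=
      fun r hr => (relabel_mem_rules g).mpr ⟨r, hr, rfl⟩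
    have := derives_map (g := g) (g' := relabel g) (enc g) hfe hder
    simpa [relabel, Function.comp_def] using this

lemma relabel_cnf (hg : IsCNF g) : IsCNF (relabel g) := by
  intro r' hr'
  obtain ⟨r, hr, rfl⟩ := (relabel_mem_rules g).mp hr'
  rcases hg r hr with ⟨a, hout⟩ | ⟨C, D, hC, hD, hout⟩ | ⟨hin, hout⟩
  · exact Or.inl ⟨a, by simp [mapRule, hout]⟩
  · refine Or.inr (Or.inl ⟨enc g C, enc g D, ?_, ?_, by simp [mapRule, hout]⟩)
    · exact fun h => hC (enc_injective g h)
    · exact fun h => hD (enc_injective g h)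
  · exact Or.inr (Or.inr ⟨congrArg (enc g) hin, by simp [mapRule, hout]⟩)

end RelabelGrammar

section EmptyGrammar

omit [Fintype α]

abbrev emptyG : ContextFreeGrammar α := ⟨PUnit, PUnit.unit, ∅⟩

lemma emptyG_language : ∀ w : List α, w ∉ (emptyG (α := α)).language := by
  intro w
  rw [ContextFreeGrammar.mem_language_iff]
  intro hder
  rcases hder.eq_or_head with heq | ⟨x, ⟨r, hrmem, -⟩, -⟩
  · cases w with
    | nil => simp at heq
    | cons a t => simp at heq
  · simp [emptyG] at hrmem

lemma emptyG_cnf : IsCNF (emptyG (α := α)) := by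
  intro r hr
  simp [emptyG] at hr

end EmptyGrammar

/-! ### Cardinality -/

lemma card_NTc (G : ContextFreeGrammar α) [Fintype G.NT] [DecidableEq G.NT] :
    Fintype.card (NTc G) = (Fintype.card G.NT - 1) * Fintype.card α + 1 := by
  have h1 : Fintype.card (NTc G) = Fintype.card ({A : G.NT // A ≠ G.initial} × α) + 1 :=
    Fintype.card_option
  rw [h1, Fintype.card_prod]
  congr 2
  have h2 : Fintype.card {A : G.NT // A ≠ G.initial} = Fintype.card G.NT -
      Fintype.card {A : G.NT // A = G.initial} := Fintype.card_subtype_compl _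
  rw [h2, Fintype.card_subtype_eq]

end CnfAux

/-- For every CFG `G` in Chomsky normal form with `h` variables over a
terminal alphabet of `m` letters, there exists a CFG in Chomsky normal form with at most
`m*h - m + 1` variables generating exactly the nonunary part of `L(G)`. -/
theorem cnf_nonunary_part (α : Type) [Fintype α] (m h : ℕ) (hα : Fintype.card α = m)
    (G : ContextFreeGrammar α) (hG : IsCNF G)
    (fG : Fintype G.NT) (hh : @Fintype.card G.NT fG = h) :
    ∃ (G' : ContextFreeGrammar α) (fG' : Fintype G'.NT),
      IsCNF G' ∧
      @Fintype.card G'.NT fG' ≤ m * h - m + 1 ∧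
      G'.language = {w | w ∈ G.language ∧ ¬ IsUnaryWord w} := by
  classical
  letI := fG
  subst hα hh
  by_cases hm : 1 < Fintype.card α
  · letI instGc : Fintype (CnfAux.Gc G).NT := inferInstanceAs (Fintype (CnfAux.NTc G))
    letI instR : Fintype (CnfAux.relabel (CnfAux.Gc G)).NT :=
      inferInstanceAs (Fintype (ULift (Fin (Fintype.card (CnfAux.Gc G).NT))))
    refine ⟨CnfAux.relabel (CnfAux.Gc G), instR, ?_, ?_, ?_⟩
    · exact CnfAux.relabel_cnf _ (CnfAux.cnf_Gc hG)
    · have e1 : Fintype.card (CnfAux.relabel (CnfAux.Gc G)).NT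
          = Fintype.card (CnfAux.NTc G) :=
        Fintype.card_congr (Equiv.ulift.trans (Fintype.equivFin (CnfAux.NTc G)).symm)
      have e2 : (Fintype.card G.NT - 1) * Fintype.card α + 1
          = Fintype.card α * Fintype.card G.NT - Fintype.card α + 1 := by
        rw [Nat.sub_mul, one_mul, Nat.mul_comm]
      exact le_of_eq (e1.trans ((CnfAux.card_NTc G).trans e2))
    · rw [CnfAux.relabel_language, CnfAux.Gc_language hG hm]
  · refine ⟨CnfAux.emptyG (α := α), inferInstanceAs (Fintype PUnit),
      CnfAux.emptyG_cnf, ?_, ?_⟩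
    · have e1 : @Fintype.card (CnfAux.emptyG (α := α)).NT
          (inferInstanceAs (Fintype PUnit)) = 1 := Fintype.card_punit
      exact le_trans (le_of_eq e1) (Nat.succ_le_succ (Nat.zero_le _))
    · have hsub : Subsingleton α := Fintype.card_le_one_iff_subsingleton.mp (by omega)
      ext w
      constructor
      · intro hw; exact ((CnfAux.emptyG_language w) hw).elim
      · rintro ⟨-, hnu⟩
        exact absurd (fun c _ c' _ => Subsingleton.elim c c') hnu
end

section
/- For every context-free grammar G in Chomsky normal form with h variables over a terminal alphabet Σ = {a_1, …, a_m} and every i ∈ {1, …, m}, there exists a context-free grammar in Chomsky normal form with at most h variables generating exactly the unary part L(G) ∩ {a_i}^* of L(G). -/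
universe u v

namespace CnfUnaryAux

open scoped Classical

variable {α : Type}

/-- Relabel a symbol along a map of nonterminals. -/
def symMap {N : Type u} {N' : Type v} (f : N → N') : Symbol α N → Symbol α N'
  | .terminal t => .terminal t
  | .nonterminal n => .nonterminal (f n)

@[simp] lemma symMap_terminal {N : Type u} {N' : Type v} (f : N → N') (t : α) :
    symMap f (Symbol.terminal t : Symbol α N) = Symbol.terminal t := rfl

@[simp] lemma symMap_nonterminal {N : Type u} {N' : Type v} (f : N → N') (n : N) :
    symMap f (Symbol.nonterminal n : Symbol α N) = Symbol.nonterminal (f n) := rfl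

@[simp] lemma symMap_symMap {N : Type u} {N' : Type v} (e : N ≃ N') (s : Symbol α N) :
    symMap e.symm (symMap e s) = s := by cases s <;> simp [symMap]

@[simp] lemma symMap_symMap' {N : Type u} {N' : Type v} (e : N ≃ N') (s : Symbol α N') :
    symMap e (symMap e.symm s) = s := by cases s <;> simp [symMap]

/-- Relabel a rule along a map of nonterminals. -/
def ruleMap {N : Type u} {N' : Type v} (f : N → N') (r : ContextFreeRule α N) :
    ContextFreeRule α N' :=
  ⟨f r.input, r.output.map (symMap f)⟩

open Classical in
/-- Relabel the nonterminals of a grammar along an equivalence. -/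
noncomputable def relabel (G : ContextFreeGrammar α) {N' : Type} (e : G.NT ≃ N') :
    ContextFreeGrammar α :=
  ⟨N', e G.initial, G.rules.image (ruleMap e)⟩

lemma rewrites_map {N : Type u} {N' : Type v} (f : N → N') {r : ContextFreeRule α N}
    {u v : List (Symbol α N)} (h : r.Rewrites u v) :
    (ruleMap f r).Rewrites (u.map (symMap f)) (v.map (symMap f)) := by
  obtain ⟨p, q, rfl, rfl⟩ := h.exists_parts
  rw [ContextFreeRule.rewrites_iff]
  exact ⟨p.map (symMap f), q.map (symMap f), by simp [ruleMap], by simp [ruleMap]⟩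

lemma relabel_derives {G : ContextFreeGrammar α} {N' : Type} (e : G.NT ≃ N')
    {u v : List (Symbol α G.NT)} (h : G.Derives u v) :
    (relabel G e).Derives (u.map (symMap e)) (v.map (symMap e)) := by
  induction h with
  | refl => rfl
  | tail _ hstep ih =>
    obtain ⟨r, hr, hrw⟩ := hstep
    refine ih.trans_produces ⟨ruleMap e r, ?_, rewrites_map e hrw⟩
    exact Finset.mem_image_of_mem _ hr

lemma relabel_derives_rev {G : ContextFreeGrammar α} {N' : Type} (e : G.NT ≃ N')
    {u v : List (Symbol α N')} (h : (relabel G e).Derives u v) :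
    G.Derives (u.map (symMap e.symm)) (v.map (symMap e.symm)) := by
  induction h with
  | refl => rfl
  | tail _ hstep ih =>
    obtain ⟨r', hr', hrw⟩ := hstep
    obtain ⟨r, hr, rfl⟩ := Finset.mem_image.mp hr'
    refine ih.trans_produces ⟨r, hr, ?_⟩
    have := rewrites_map e.symm hrw
    have hrule : ruleMap e.symm (ruleMap e r) = r := by
      simp [ruleMap, List.map_map, Function.comp_def]
    rwa [hrule] at this

lemma relabel_language (G : ContextFreeGrammar α) {N' : Type} (e : G.NT ≃ N') :
    (relabel G e).language = G.language := by
  ext w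
  simp only [ContextFreeGrammar.mem_language_iff]
  constructor
  · intro hw
    have := relabel_derives_rev e hw
    simpa [relabel, List.map_map, Function.comp_def] using this
  · intro hw
    have := relabel_derives e hw
    simpa [relabel, List.map_map, Function.comp_def] using this

lemma relabel_cnf {G : ContextFreeGrammar α} (hG : IsCNF G) {N' : Type} (e : G.NT ≃ N') :
    IsCNF (relabel G e) := by
  intro r' hr'
  obtain ⟨r, hr, rfl⟩ := Finset.mem_image.mp hr'
  rcases hG r hr with ⟨t, ht⟩ | ⟨C, D, hC, hD, hCD⟩ | ⟨h1, h2⟩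
  · exact Or.inl ⟨t, by simp [ruleMap, ht]; rfl⟩
  · refine Or.inr (Or.inl ⟨e C, e D, ?_, ?_, by simp [ruleMap, hCD]; rfl⟩)
    · simpa [relabel] using fun hc => hC (e.injective hc)
    · simpa [relabel] using fun hc => hD (e.injective hc)
  · exact Or.inr (Or.inr ⟨by simp [relabel, ruleMap, h1], by simp [ruleMap, h2]; rfl⟩)

open Classical in
/-- The subgrammar keeping only rules whose terminal symbols are all `a`. -/
noncomputable def unaryRestrict (G : ContextFreeGrammar α) (a : α) :
    ContextFreeGrammar α :=
  ⟨G.NT, G.initial,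
    G.rules.filter (fun r => ∀ b : α, Symbol.terminal b ∈ r.output → b = a)⟩

lemma unaryRestrict_rules_sub (G : ContextFreeGrammar α) (a : α) :
    ∀ r ∈ (unaryRestrict G a).rules, r ∈ G.rules := by
  intro r hr
  exact (Finset.mem_filter.mp hr).1

lemma unaryRestrict_rules_good (G : ContextFreeGrammar α) (a : α) :
    ∀ r ∈ (unaryRestrict G a).rules, ∀ b : α, Symbol.terminal b ∈ r.output → b = a := by
  intro r hr
  exact (Finset.mem_filter.mp hr).2

/-- Terminals persist along derivations. -/
lemma terminal_mem_of_derives {G : ContextFreeGrammar α}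
    {u v : List (Symbol α G.NT)} (h : G.Derives u v) {b : α}
    (hb : Symbol.terminal b ∈ u) : Symbol.terminal b ∈ v := by
  induction h with
  | refl => exact hb
  | tail _ hstep ih =>
    obtain ⟨r, _, hrw⟩ := hstep
    obtain ⟨p, q, hu, hv⟩ := hrw.exists_parts
    subst hu hv
    simp only [List.mem_append, List.mem_singleton] at ih ⊢
    rcases ih with (h | h) | h
    · exact Or.inl (Or.inl h)
    · cases h
    · exact Or.inr h

/-- A derivation in the restricted grammar is a derivation in `G`. -/
lemma unaryRestrict_derives_le {G : ContextFreeGrammar α} {a : α}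
    {u v : List (Symbol α (unaryRestrict G a).NT)}
    (h : (unaryRestrict G a).Derives u v) : G.Derives u v := by
  induction h with
  | refl => exact ContextFreeGrammar.Derives.refl _
  | tail _ hstep ih =>
    obtain ⟨r, hr, hrw⟩ := hstep
    exact ih.trans_produces ⟨r, unaryRestrict_rules_sub G a r hr, hrw⟩

/-- Strings derived in the restricted grammar from a good string have only `a` as terminal. -/
lemma unaryRestrict_good {G : ContextFreeGrammar α} {a : α}
    {u v : List (Symbol α (unaryRestrict G a).NT)}
    (h : (unaryRestrict G a).Derives u v)
    (hu : ∀ b : α, Symbol.terminal b ∈ u → b = a) :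
    ∀ b : α, Symbol.terminal b ∈ v → b = a := by
  induction h with
  | refl => exact hu
  | tail _ hstep ih =>
    obtain ⟨r, hr, hrw⟩ := hstep
    obtain ⟨p, q, hu', hv⟩ := hrw.exists_parts
    subst hu' hv
    intro b hb
    simp only [List.mem_append] at hb
    rcases hb with (h | h) | h
    · exact ih b (by simp [h])
    · exact unaryRestrict_rules_good G a r hr b h
    · exact ih b (by simp [h])

/-- A `G`-derivation ending in an all-`a` string lives in the restricted grammar. -/
lemma derives_unaryRestrict {G : ContextFreeGrammar α} {a : α}
    {u v : List (Symbol α G.NT)} (h : G.Derives u v)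
    (hv : ∀ b : α, Symbol.terminal b ∈ v → b = a) :
    (unaryRestrict G a).Derives u v := by
  induction h using Relation.ReflTransGen.head_induction_on with
  | refl => exact ContextFreeGrammar.Derives.refl _
  | head hstep hrest ih =>
    rename_i x y
    obtain ⟨r, hr, hrw⟩ := hstep
    have hy : ∀ b : α, Symbol.terminal b ∈ y → b = a := fun b hb =>
      hv b (terminal_mem_of_derives hrest hb)
    have hrgood : ∀ b : α, Symbol.terminal b ∈ r.output → b = a := by
      obtain ⟨p, q, hx, hy'⟩ := hrw.exists_parts
      intro b hb
      exact hy b (by subst hy'; simp [hb])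
    have hr' : r ∈ (unaryRestrict G a).rules := by
      classical
      exact Finset.mem_filter.mpr ⟨hr, hrgood⟩
    exact Relation.ReflTransGen.head ⟨r, hr', hrw⟩ ih

lemma unaryRestrict_language (G : ContextFreeGrammar α) (a : α) :
    (unaryRestrict G a).language = {w | w ∈ G.language ∧ ∀ c ∈ w, c = a} := by
  ext w
  simp only [ContextFreeGrammar.mem_language_iff, Set.mem_setOf_eq]
  constructor
  · intro hw
    refine ⟨unaryRestrict_derives_le hw, fun c hc => ?_⟩
    exact unaryRestrict_good hw (by simp) c (by simp [hc])
  · rintro ⟨hw, hwa⟩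
    apply derives_unaryRestrict hw
    intro b hb
    simp only [List.mem_map] at hb
    obtain ⟨c, hc, hcb⟩ := hb
    obtain rfl : c = b := by injection hcb
    exact hwa c hc

lemma unaryRestrict_cnf {G : ContextFreeGrammar α} (hG : IsCNF G) (a : α) :
    IsCNF (unaryRestrict G a) := fun r hr => hG r (unaryRestrict_rules_sub G a r hr)

end CnfUnaryAux

open CnfUnaryAux in
/-- For every CFG `G` in Chomsky normal form with `h` variables over a
terminal alphabet `α = {a_1, …, a_m}` and every letter `a` of the alphabet, there exists a
CFG in Chomsky normal form with at most `h` variables generating exactly the unary part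
`L(G) ∩ {a}^*` of `L(G)`. -/
theorem cnf_unary_part (α : Type) [Fintype α] (m h : ℕ) (hα : Fintype.card α = m)
    (G : ContextFreeGrammar α) (hG : IsCNF G)
    (fG : Fintype G.NT) (hh : @Fintype.card G.NT fG = h) (a : α) :
    ∃ (G' : ContextFreeGrammar α) (fG' : Fintype G'.NT),
      IsCNF G' ∧
      @Fintype.card G'.NT fG' ≤ h ∧
      G'.language = {w | w ∈ G.language ∧ ∀ c ∈ w, c = a} := by
  subst hh
  have e : (unaryRestrict G a).NT ≃ ULift.{_} (Fin (@Fintype.card G.NT fG)) :=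
    ((@Fintype.equivFin G.NT fG).trans Equiv.ulift.symm)
  refine ⟨relabel (unaryRestrict G a) e, ULift.fintype _, ?_, ?_, ?_⟩
  · exact relabel_cnf (unaryRestrict_cnf hG a) e
  · simp [relabel]
  · rw [relabel_language, unaryRestrict_language]
end

section
/- Let Σ = {a_1, …, a_m} with m ≥ 2, let g : ℕ^m → Σ* be defined by g(v) = a_1^{v[1]} a_2^{v[2]} ⋯ a_m^{v[m]}, and let f : ℕ^m → Σ* be defined by f(v) = the 1-step left circular shift of g(v) (i.e., if g(v) = c·w with c a letter then f(v) = w·c, and f(v) = ε if g(v) = ε). Then f has the prefix property over the nonunary vectors: for all nonunary vectors u, v ∈ ℕ^m, if f(u) is a prefix of f(v), then u = v. -/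
/-- The word `g(v) = a_1^{v[1]} a_2^{v[2]} ⋯ a_m^{v[m]}` over the alphabet
`{a_1, …, a_m}` (identified with `Fin m`). -/
def gWord {m : ℕ} (v : Fin m → ℕ) : List (Fin m) :=
  (List.finRange m).flatMap fun i => List.replicate (v i) i

/-- The word `f(v)`: the 1-step left circular shift of `g(v)`. -/
def fWord {m : ℕ} (v : Fin m → ℕ) : List (Fin m) :=
  (gWord v).rotate 1

/-- A vector of `ℕ^m` is unary if it has at most one nonzero component
(the null vector is unary). -/
def VecUnary {m : ℕ} (v : Fin m → ℕ) : Prop :=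
  ∀ i j : Fin m, v i ≠ 0 → v j ≠ 0 → i = j

lemma mem_gWord {m : ℕ} (v : Fin m → ℕ) (j : Fin m) : j ∈ gWord v ↔ v j ≠ 0 := by
  simp only [gWord, List.mem_flatMap, List.mem_replicate, List.mem_finRange, true_and]
  constructor
  · rintro ⟨i, hi, rfl⟩; exact hi
  · intro h; exact ⟨j, h, rfl⟩

lemma count_flatMap_replicate {m : ℕ} (v : Fin m → ℕ) (j : Fin m) :
    ∀ l : List (Fin m),
      ((l.flatMap fun i => List.replicate (v i) i).count j) = l.count j * v j := by
  intro l
  induction l with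
  | nil => simp
  | cons a t ih =>
    rw [List.flatMap_cons, List.count_append, ih, List.count_cons, List.count_replicate]
    by_cases h : a = j
    · subst h; simp [Nat.succ_mul, Nat.add_comm]
    · simp [h]

lemma count_gWord {m : ℕ} (v : Fin m → ℕ) (j : Fin m) : (gWord v).count j = v j := by
  rw [gWord, count_flatMap_replicate, List.count_eq_one_of_mem (List.nodup_finRange m)
    (List.mem_finRange j), one_mul]

lemma sorted_flatMap_replicate {m : ℕ} (v : Fin m → ℕ) :
    ∀ l : List (Fin m), l.Pairwise (· ≤ ·) →
      (l.flatMap fun i => List.replicate (v i) i).Pairwise (· ≤ ·) := by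
  intro l
  induction l with
  | nil => intro _; simp
  | cons a t ih =>
    intro hs
    rw [List.pairwise_cons] at hs
    rw [List.flatMap_cons]
    rw [List.pairwise_append]
    refine ⟨?_, ih hs.2, ?_⟩
    · exact List.pairwise_replicate.mpr (Or.inr le_rfl)
    · intro x hx y hy
      rw [List.eq_of_mem_replicate hx]
      rw [List.mem_flatMap] at hy
      obtain ⟨i, hi, hyi⟩ := hy
      rw [List.eq_of_mem_replicate hyi]
      exact hs.1 i hi

lemma sorted_gWord {m : ℕ} (v : Fin m → ℕ) : (gWord v).Pairwise (· ≤ ·) := by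
  apply sorted_flatMap_replicate
  exact (List.pairwise_lt_finRange m).imp le_of_lt

lemma count_fWord {m : ℕ} (v : Fin m → ℕ) (j : Fin m) : (fWord v).count j = v j := by
  rw [fWord, (List.rotate_perm _ _).count_eq, count_gWord]

/-- For `m ≥ 2`, the map `f` has the prefix property over the nonunary
vectors: for all nonunary `u, v ∈ ℕ^m`, if `f(u)` is a prefix of `f(v)` then `u = v`. -/
theorem fWord_prefix_property (m : ℕ) (hm : 2 ≤ m) (u v : Fin m → ℕ)
    (hu : ¬ VecUnary u) (hv : ¬ VecUnary v)
    (hpre : fWord u <+: fWord v) : u = v := by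
  classical
  unfold VecUnary at hu hv
  push_neg at hu hv
  obtain ⟨i, j, hi, hj, hij⟩ := hu
  obtain ⟨i', j', hi', hj', hij'⟩ := hv
  have hgu_ne : gWord u ≠ [] := List.ne_nil_of_mem ((mem_gWord u i).mpr hi)
  have hgv_ne : gWord v ≠ [] := List.ne_nil_of_mem ((mem_gWord v i').mpr hi')
  obtain ⟨a, t, hgu⟩ := List.exists_cons_of_ne_nil hgu_ne
  obtain ⟨b, s, hgv⟩ := List.exists_cons_of_ne_nil hgv_ne
  have hfu : fWord u = t ++ [a] := by
    rw [fWord, hgu, List.rotate_cons_succ, List.rotate_zero]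
  have hfv : fWord v = s ++ [b] := by
    rw [fWord, hgv, List.rotate_cons_succ, List.rotate_zero]
  have hlen := hpre.length_le
  rcases eq_or_lt_of_le hlen with heq | hlt
  · have hEq : fWord u = fWord v := hpre.eq_of_length heq
    funext k
    rw [← count_fWord u k, hEq, count_fWord]
  · exfalso
    -- f(u) is a prefix of dropLast (f(v)) = s
    have hpre2 : fWord u <+: s := by
      have hdrop : (fWord v).dropLast = s := by rw [hfv, List.dropLast_concat]
      rw [← hdrop]
      obtain ⟨x, hx⟩ := hpre
      have hxne : x ≠ [] := by
        intro h
        rw [h, List.append_nil] at hx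
        rw [hx] at hlt
        exact lt_irrefl _ hlt
      rw [← hx, List.dropLast_append_of_ne_nil hxne]
      exact ⟨x.dropLast, rfl⟩
    -- s is sorted, hence so is f(u) = t ++ [a]
    have hsorted_s : s.Pairwise (· ≤ ·) := by
      have hs := sorted_gWord v
      rw [hgv, List.pairwise_cons] at hs
      exact hs.2
    have hsorted_fu : (fWord u).Pairwise (· ≤ ·) :=
      List.Pairwise.sublist hpre2.sublist hsorted_s
    rw [hfu, List.pairwise_append] at hsorted_fu
    have hle_a : ∀ x ∈ t, x ≤ a := fun x hx =>
      hsorted_fu.2.2 x hx a (List.mem_singleton_self a)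
    -- pick k with u k ≠ 0 and k ≠ a
    have hex : ∃ k, u k ≠ 0 ∧ k ≠ a := by
      by_cases h : i = a
      · exact ⟨j, hj, fun hja => hij (h.trans hja.symm)⟩
      · exact ⟨i, hi, h⟩
    obtain ⟨k, hk, hka⟩ := hex
    have hkmem : k ∈ gWord u := (mem_gWord u k).mpr hk
    rw [hgu] at hkmem
    have hk_tail : k ∈ t := by
      rcases List.mem_cons.mp hkmem with h | h
      · exact absurd h hka
      · exact h
    have hak : a ≤ k := by
      have hs := sorted_gWord u
      rw [hgu] at hs
      exact List.rel_of_pairwise_cons hs hk_tail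
    exact hka (le_antisymm (hle_a k hk_tail) hak)
end

section
/- For every m ≥ 1 there exists a polynomial p such that for every nondeterministic finite automaton A with n states over an alphabet Σ of m letters, the Parikh image ψ(L(A)) can be written as ψ(L(A)) = Y ∪ ⋃_{i ∈ I} Z_i, where: Y ⊆ ℕ^m is a finite set of vectors all of whose components are bounded by p(n); I is a finite index set of cardinality at most p(n); and for each i ∈ I, Z_i is a linear set Z_i = {v_{i,0} + n_1 v_{i,1} + ⋯ + n_{k_i} v_{i,k_i} | n_1, …, n_{k_i} ∈ ℕ} with 0 ≤ k_i ≤ m, all components of the offset v_{i,0} bounded by p(n), and generators v_{i,1}, …, v_{i,k_i} that are linearly independent vectors from {0, 1, …, n}^m. -/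
/-- The Parikh map `ψ : (Fin m)^* → ℕ^m`, counting for each letter its number of
occurrences in the word. -/
def parikh {m : ℕ} (w : List (Fin m)) : Fin m → ℕ := fun i => w.count i

/-- The Parikh image `ψ(L)` of a language over the alphabet `Fin m`. -/
def parikhImage {m : ℕ} (L : Language (Fin m)) : Set (Fin m → ℕ) :=
  parikh '' L

/-- The linear set in `ℕ^m` with offset `v₀` and generators `vs 1, …, vs k`. -/
def linSet {m k : ℕ} (v₀ : Fin m → ℕ) (vs : Fin k → (Fin m → ℕ)) : Set (Fin m → ℕ) :=
  {x | ∃ c : Fin k → ℕ, x = fun i => v₀ i + ∑ j, c j * vs j i}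

/-- Vectors of `ℕ^m` are linearly independent if, over the integers, any vanishing
linear combination has all coefficients zero. -/
def LinIndepZ {m k : ℕ} (vs : Fin k → (Fin m → ℕ)) : Prop :=
  ∀ c : Fin k → ℤ, (∀ i : Fin m, ∑ j, c j * (vs j i : ℤ) = 0) → ∀ j, c j = 0



/-- Bound function for small relations among integer vectors. -/
def betaFn : ℕ → ℕ → ℕ → ℕ
  | 0, _, _ => 1
  | d+1, N, s => (s+1) * (N+1) * betaFn d (2*N*N + N + 1) s

lemma betaFn_pos (d N s : ℕ) : 1 ≤ betaFn d N s := by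
  induction d generalizing N with
  | zero => simp [betaFn]
  | succ d ih =>
    have := ih (2*N*N + N + 1)
    calc 1 ≤ betaFn d (2*N*N+N+1) s := this
    _ ≤ (s+1) * (N+1) * betaFn d (2*N*N+N+1) s := Nat.le_mul_of_pos_left _ (by positivity)
    _ = betaFn (d+1) N s := rfl

lemma betaFn_monoN (d : ℕ) {N N' : ℕ} (s : ℕ) (h : N ≤ N') :
    betaFn d N s ≤ betaFn d N' s := by
  induction d generalizing N N' with
  | zero => simp [betaFn]
  | succ d ih =>
    show (s+1) * (N+1) * betaFn d (2*N*N + N + 1) s ≤ (s+1) * (N'+1) * betaFn d (2*N'*N' + N' + 1) s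
    have h2 : 2*N*N + N + 1 ≤ 2*N'*N' + N' + 1 := by nlinarith
    exact Nat.mul_le_mul (Nat.mul_le_mul le_rfl (by omega)) (ih h2)

lemma betaFn_le_succ (d N s : ℕ) : betaFn d N s ≤ betaFn (d+1) N s := by
  calc betaFn d N s ≤ betaFn d (2*N*N+N+1) s := betaFn_monoN d s (by nlinarith)
  _ ≤ (s+1) * (N+1) * betaFn d (2*N*N+N+1) s := Nat.le_mul_of_pos_left _ (by positivity)

/-- If a family of integer vectors with entries bounded by `N` admits a nontrivial
integer relation, it admits one with coefficients bounded by `betaFn d N s`. -/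
theorem elim_lemma : ∀ (d : ℕ) (ι : Type) [Fintype ι] (s N : ℕ),
    Fintype.card ι ≤ s →
    ∀ v : ι → Fin d → ℤ, (∀ i j, |v i j| ≤ (N:ℤ)) →
    (∃ lam : ι → ℤ, (∀ jj, ∑ i, lam i * v i jj = 0) ∧ ∃ i, lam i ≠ 0) →
    ∃ lam : ι → ℤ, (∀ jj, ∑ i, lam i * v i jj = 0) ∧ (∃ i, lam i ≠ 0) ∧
      ∀ i, |lam i| ≤ (betaFn d N s : ℤ) := by
  intro d
  induction d with
  | zero =>
    intro ι _ s N hcard v hv ⟨lam, hrel, i0, hi0⟩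
    classical
    refine ⟨Pi.single i0 1, fun jj => jj.elim0, ⟨i0, by simp⟩, fun i => ?_⟩
    rcases eq_or_ne i i0 with h | h <;> simp [Pi.single_apply, h, betaFn]
  | succ d ih =>
    intro ι _ s N hcard v hv ⟨lam, hrel, i0, hi0⟩
    classical
    by_cases hz : ∃ i, v i = 0
    · obtain ⟨i1, hi1⟩ := hz
      refine ⟨Pi.single i1 1, fun jj => ?_, ⟨i1, by simp⟩, fun i => ?_⟩
      · rw [Finset.sum_eq_single i1]
        · simp [hi1]
        · intro b _ hb; simp [Pi.single_apply, hb]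
        · simp
      · rcases eq_or_ne i i1 with h | h
        · subst h; simp only [Pi.single_eq_same, abs_one]
          exact_mod_cast betaFn_pos (d+1) N s
        · rw [Pi.single_eq_of_ne h]; simp
    · by_cases h0 : ∀ i, v i 0 = 0
      · -- first coordinate all zero: project away
        obtain ⟨lam', hrel', hnz', hbd'⟩ :=
          ih ι s N hcard (fun i j => v i j.succ)
            (fun i j => hv i j.succ) ⟨lam, fun jj => hrel jj.succ, i0, hi0⟩
        refine ⟨lam', fun jj => ?_, hnz', fun i => le_trans (hbd' i) ?_⟩
        · refine Fin.cases ?_ ?_ jj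
          · simp [h0]
          · intro j; exact hrel' j
        · exact_mod_cast betaFn_le_succ d N s
      · push_neg at h0
        obtain ⟨j₀, ha⟩ := h0
        set a := v j₀ 0 with hadef
        set N₂ := 2*N*N + N + 1 with hN2
        -- the eliminated family
        set ι' := {i : ι // i ≠ j₀} with hι'
        set w : ι' → Fin d → ℤ := fun i j => a * v i.1 j.succ - v i.1 0 * v j₀ j.succ with hw
        have hsub : ∀ g : ι → ℤ, ∑ i : ι', g i.1 = ∑ i ∈ Finset.univ.erase j₀, g i := by
          intro g
          exact (Finset.sum_subtype (Finset.univ.erase j₀) (fun x => by simp) g).symm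
        have hsplit : ∀ g : ι → ℤ, (∑ i : ι', g i.1) + g j₀ = ∑ i : ι, g i := by
          intro g; rw [hsub]; exact Finset.sum_erase_add _ _ (Finset.mem_univ _)
        have hwbd : ∀ (i : ι') (j : Fin d), |w i j| ≤ (N₂ : ℤ) := by
          intro i j
          have h1 : |a * v i.1 j.succ - v i.1 0 * v j₀ j.succ| ≤ |a * v i.1 j.succ| + |v i.1 0 * v j₀ j.succ| := abs_sub _ _
          rw [abs_mul, abs_mul] at h1
          have hN : (0:ℤ) ≤ N := le_trans (abs_nonneg _) (hv j₀ 0)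
          have := hv i.1 j.succ; have := hv i.1 0; have := hv j₀ j.succ; have := hv j₀ 0
          calc |w i j| ≤ _ := h1
          _ ≤ (N:ℤ)*N + N*N := by
              gcongr <;> first | exact abs_nonneg _ | assumption
          _ ≤ (N₂:ℤ) := by push_cast [hN2]; nlinarith
        have hwdep : ∃ mu : ι' → ℤ, (∀ jj, ∑ i, mu i * w i jj = 0) ∧ ∃ i, mu i ≠ 0 := by
          refine ⟨fun i => lam i.1, fun j => ?_, ?_⟩
          · have hS1 : (∑ i : ι', lam i.1 * v i.1 j.succ) = - (lam j₀ * v j₀ j.succ) := by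
              have := hsplit (fun i => lam i * v i j.succ)
              rw [hrel j.succ] at this; linarith
            have hS0 : (∑ i : ι', lam i.1 * v i.1 0) = - (lam j₀ * a) := by
              have := hsplit (fun i => lam i * v i 0)
              rw [hrel 0] at this; linarith
            have expand : ∑ i : ι', lam i.1 * w i j =
                a * (∑ i : ι', lam i.1 * v i.1 j.succ)
                  - (∑ i : ι', lam i.1 * v i.1 0) * v j₀ j.succ := by
              rw [Finset.mul_sum, Finset.sum_mul, ← Finset.sum_sub_distrib]
              exact Finset.sum_congr rfl (fun i _ => by simp only [hw]; ring)
            rw [expand, hS1, hS0]; ring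
          · by_contra hcon
            push_neg at hcon
            have hlam0 : ∀ i : ι, i ≠ j₀ → lam i = 0 := fun i hi => hcon ⟨i, hi⟩
            have : (∑ i : ι', lam i.1 * v i.1 0) + lam j₀ * a = 0 := by
              rw [hsplit (fun i => lam i * v i 0)]; exact hrel 0
            rw [Finset.sum_eq_zero (fun i _ => by rw [hlam0 i.1 i.2]; ring)] at this
            have hlj : lam j₀ = 0 := by
              rcases mul_eq_zero.1 (by linarith : lam j₀ * a = 0) with h | h
              · exact h
              · exact absurd h ha
            rcases eq_or_ne i0 j₀ with h | h
            · exact hi0 (h ▸ hlj)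
            · exact hi0 (hlam0 i0 h)
        obtain ⟨mu, hmurel, hmunz, hmubd⟩ :=
          ih ι' s N₂ (le_trans (Fintype.card_subtype_le _) hcard) w hwbd hwdep
        -- assemble the relation for v
        set lamF : ι → ℤ := fun i => if h : i = j₀ then -(∑ i' : ι', mu i' * v i'.1 0) else a * mu ⟨i, h⟩ with hlamF
        have hlamF' : ∀ i : ι', lamF i.1 = a * mu i := by
          intro i; simp only [hlamF, dif_neg i.2]; rfl
        have hlamFj : lamF j₀ = -(∑ i' : ι', mu i' * v i'.1 0) := by simp [hlamF]
        have key : ∀ (f : ι → ℤ), (∑ i : ι, lamF i * f i) =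
            a * (∑ i : ι', mu i * f i.1) + lamF j₀ * f j₀ := by
          intro f
          rw [← hsplit (fun i => lamF i * f i)]
          congr 1
          rw [Finset.mul_sum]
          exact Finset.sum_congr rfl (fun i _ => by rw [hlamF' i]; ring)
        refine ⟨lamF, fun jj => ?_, ?_, fun i => ?_⟩
        · refine Fin.cases ?_ ?_ jj
          · rw [key (fun i => v i 0), hlamFj]; ring
          · intro j
            have e1 : a * (∑ i : ι', mu i * v i.1 j.succ)
                - (∑ i : ι', mu i * v i.1 0) * v j₀ j.succ = 0 := by
              have expand : ∑ i : ι', mu i * w i j =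
                  a * (∑ i : ι', mu i * v i.1 j.succ)
                    - (∑ i : ι', mu i * v i.1 0) * v j₀ j.succ := by
                rw [Finset.mul_sum, Finset.sum_mul, ← Finset.sum_sub_distrib]
                exact Finset.sum_congr rfl (fun i _ => by simp only [hw]; ring)
              rw [← expand]; exact hmurel j
            rw [key (fun i => v i j.succ), hlamFj]
            linarith [e1]
        · obtain ⟨i', hi'⟩ := hmunz
          exact ⟨i'.1, by rw [hlamF' i']; exact mul_ne_zero ha hi'⟩
        · have hbeta : (0:ℤ) ≤ betaFn d N₂ s := by positivity
          have hN : (0:ℤ) ≤ N := le_trans (abs_nonneg _) (hv j₀ 0)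
          have hstep : ((betaFn (d+1) N s : ℕ) : ℤ) = ((s:ℤ)+1) * ((N:ℤ)+1) * (betaFn d N₂ s : ℤ) := by
            show ((((s+1) * (N+1) * betaFn d (2*N*N+N+1) s) : ℕ) : ℤ) = _
            push_cast [hN2]; ring
          rcases eq_or_ne i j₀ with h | h
          · subst h
            rw [hlamFj, abs_neg]
            calc |∑ i' : ι', mu i' * v i'.1 0| ≤ ∑ i' : ι', |mu i' * v i'.1 0| :=
                  Finset.abs_sum_le_sum_abs _ _
            _ ≤ ∑ _i' : ι', (betaFn d N₂ s : ℤ) * N := by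
                  refine Finset.sum_le_sum (fun i' _ => ?_)
                  rw [abs_mul]
                  exact mul_le_mul (hmubd i') (hv i'.1 0) (abs_nonneg _) hbeta
            _ = (Fintype.card ι' : ℤ) * ((betaFn d N₂ s : ℤ) * N) := by
                  rw [Finset.sum_const, Finset.card_univ]; push_cast; ring
            _ ≤ (s:ℤ) * ((betaFn d N₂ s : ℤ) * N) := by
                  have hc : (Fintype.card ι' : ℤ) ≤ s := by
                    exact_mod_cast le_trans (Fintype.card_subtype_le _) hcard
                  exact mul_le_mul_of_nonneg_right hc (by positivity)
            _ = ((s:ℤ)*(N:ℤ)) * (betaFn d N₂ s : ℤ) := by ring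
            _ ≤ (((s:ℤ)+1)*((N:ℤ)+1)) * (betaFn d N₂ s : ℤ) := by
                  refine mul_le_mul_of_nonneg_right ?_ hbeta
                  have hs0 : (0:ℤ) ≤ (s:ℤ) := Int.natCast_nonneg _
                  nlinarith
            _ = ((s:ℤ)+1) * ((N:ℤ)+1) * (betaFn d N₂ s : ℤ) := by ring
            _ = _ := hstep.symm
          · rw [show lamF i = a * mu ⟨i, h⟩ from hlamF' ⟨i, h⟩, abs_mul]
            calc |a| * |mu ⟨i, h⟩| ≤ (N:ℤ) * betaFn d N₂ s :=
                  mul_le_mul (hv j₀ 0) (hmubd _) (abs_nonneg _) hN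
            _ ≤ (((s:ℤ)+1) * ((N:ℤ)+1)) * (betaFn d N₂ s : ℤ) := by
                  refine mul_le_mul_of_nonneg_right ?_ hbeta
                  have hs0 : (0:ℤ) ≤ (s:ℤ) := Int.natCast_nonneg _
                  nlinarith
            _ = ((s:ℤ)+1) * ((N:ℤ)+1) * (betaFn d N₂ s : ℤ) := by ring
            _ = _ := hstep.symm

lemma betaFn_monoS (d N : ℕ) {s s' : ℕ} (h : s ≤ s') : betaFn d N s ≤ betaFn d N s' := by
  induction d generalizing N with
  | zero => simp [betaFn]
  | succ d ih =>
    show (s+1) * (N+1) * betaFn d (2*N*N + N + 1) s ≤ (s'+1) * (N+1) * betaFn d (2*N*N + N + 1) s'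
    exact Nat.mul_le_mul (Nat.mul_le_mul (by omega) le_rfl) (ih _)

theorem arith_lemma (m n : ℕ) : ∀ (s : ℕ) (F : Finset (Fin m → ℕ)), F.card ≤ s →
    (∀ c ∈ F, ∀ i, c i ≤ n) →
    ∀ μ : (Fin m → ℕ) → ℕ,
    ∃ (μ' : (Fin m → ℕ) → ℕ) (k : ℕ) (dd : Fin k → (Fin m → ℕ)) (ν : Fin k → ℕ),
      (∀ j, dd j ∈ F) ∧ LinIndepZ dd ∧ k ≤ m ∧ (∀ c, μ' c ≤ betaFn m n s) ∧
      (∀ i, (∑ c ∈ F, μ c * c i) = (∑ c ∈ F, μ' c * c i) + ∑ j, ν j * dd j i) := by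
  intro s
  induction s with
  | zero =>
    intro F hF hbox μ
    have : F = ∅ := Finset.card_eq_zero.1 (Nat.le_zero.1 hF)
    subst this
    exact ⟨0, 0, Fin.elim0, Fin.elim0, fun j => j.elim0, fun c _ j => j.elim0,
      Nat.zero_le _, fun c => Nat.zero_le _, fun i => by simp⟩
  | succ s ih =>
    intro F hF hbox μ
    classical
    set ι := {x // x ∈ F} with hι
    set vInt : ι → Fin m → ℤ := fun c i => (c.1 i : ℤ) with hvInt
    have hcardι : Fintype.card ι ≤ s + 1 := by
      simpa [hι, Fintype.card_coe] using hF
    have hsubF : ∀ g : (Fin m → ℕ) → ℤ, (∑ c ∈ F, g c) = ∑ x : ι, g x.1 :=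
      fun g => Finset.sum_subtype F (fun x => Iff.rfl) g
    have hsubFN : ∀ g : (Fin m → ℕ) → ℕ, (∑ c ∈ F, g c) = ∑ x : ι, g x.1 :=
      fun g => Finset.sum_subtype F (fun x => Iff.rfl) g
    by_cases hind : ∃ lam : ι → ℤ, (∀ jj, ∑ i, lam i * vInt i jj = 0) ∧ ∃ i, lam i ≠ 0
    · -- dependent case
      set B := betaFn m n (s+1) with hB
      obtain ⟨lam0, hrel0, hnz0, hbd0⟩ :=
        elim_lemma m ι (s+1) n hcardι vInt
          (fun i j => by
            simp only [hvInt, Int.abs_natCast]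
            exact_mod_cast hbox i.1 i.2 j) hind
      -- arrange a negative coefficient
      obtain ⟨lam, hrel, hbd, ineg, hineg⟩ :
          ∃ lam : ι → ℤ, (∀ jj, ∑ i, lam i * vInt i jj = 0) ∧
            (∀ i, |lam i| ≤ (B:ℤ)) ∧ ∃ i, lam i < 0 := by
        obtain ⟨i1, hi1⟩ := hnz0
        rcases lt_or_gt_of_ne hi1 with h | h
        · exact ⟨lam0, hrel0, hbd0, i1, h⟩
        · refine ⟨-lam0, fun jj => ?_, fun i => by rw [Pi.neg_apply, abs_neg]; exact hbd0 i,
            i1, by simp [h]⟩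
          simp only [Pi.neg_apply, neg_mul]
          rw [Finset.sum_neg_distrib, hrel0 jj, neg_zero]
      set Fneg := Finset.univ.filter (fun i : ι => lam i < 0) with hFneg
      have hFnegne : Fneg.Nonempty := ⟨ineg, by simp [hFneg, hineg]⟩
      set f : ι → ℕ := fun i => μ i.1 / (-(lam i)).toNat with hf
      obtain ⟨istar, histar, hmin⟩ := Finset.exists_min_image Fneg f hFnegne
      set t := f istar with ht
      have histar' : lam istar < 0 := (Finset.mem_filter.1 histar).2
      set dstar := (-(lam istar)).toNat with hdstar
      have hdstarpos : 0 < dstar := by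
        simp only [hdstar]; omega
      have hdstarB : dstar ≤ B := by
        have := hbd istar
        rw [abs_of_neg histar'] at this
        omega
      set lamext : (Fin m → ℕ) → ℤ := fun c => if h : c ∈ F then lam ⟨c, h⟩ else 0 with hlamext
      set munew : (Fin m → ℕ) → ℕ := fun c => ((μ c : ℤ) + t * lamext c).toNat with hmunew
      have hnonneg : ∀ c ∈ F, (0:ℤ) ≤ (μ c : ℤ) + t * lamext c := by
        intro c hc
        rw [hlamext]
        simp only [dif_pos hc]
        rcases le_or_gt 0 (lam ⟨c, hc⟩) with h | h
        · positivity
        · have hmem : (⟨c, hc⟩ : ι) ∈ Fneg := by simp [hFneg, h]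
          have htle : t ≤ μ c / (-(lam ⟨c, hc⟩)).toNat := hmin _ hmem
          have hpos : 0 < (-(lam ⟨c, hc⟩)).toNat := by omega
          have := (Nat.le_div_iff_mul_le hpos).1 htle
          have hcast : ((-(lam ⟨c, hc⟩)).toNat : ℤ) = -(lam ⟨c, hc⟩) :=
            Int.toNat_of_nonneg (by omega)
          have : (t * (-(lam ⟨c, hc⟩)).toNat : ℤ) ≤ (μ c : ℤ) := by exact_mod_cast this
          rw [hcast] at this
          linarith
      have hmunewc : ∀ c ∈ F, (munew c : ℤ) = (μ c : ℤ) + t * lamext c := by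
        intro c hc
        rw [hmunew]
        exact Int.toNat_of_nonneg (hnonneg c hc)
      -- sum preservation
      have hpreserve : ∀ i : Fin m, (∑ c ∈ F, munew c * c i) = ∑ c ∈ F, μ c * c i := by
        intro i
        have hz : (∑ x : ι, lam x * vInt x i) = 0 := hrel i
        have : ((∑ c ∈ F, munew c * c i : ℕ) : ℤ) = ((∑ c ∈ F, μ c * c i : ℕ) : ℤ) := by
          push_cast
          calc (∑ c ∈ F, (munew c : ℤ) * (c i : ℤ))
              = ∑ c ∈ F, ((μ c : ℤ) + t * lamext c) * (c i : ℤ) :=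
                Finset.sum_congr rfl (fun c hc => by rw [hmunewc c hc])
          _ = (∑ c ∈ F, (μ c : ℤ) * c i) + t * ∑ c ∈ F, lamext c * c i := by
                rw [Finset.mul_sum, ← Finset.sum_add_distrib]
                exact Finset.sum_congr rfl (fun c hc => by ring)
          _ = (∑ c ∈ F, (μ c : ℤ) * c i) := by
                have : (∑ c ∈ F, lamext c * c i) = ∑ x : ι, lam x * vInt x i := by
                  rw [hsubF (fun c => lamext c * c i)]
                  exact Finset.sum_congr rfl (fun x _ => by
                    rw [hlamext]; simp only [dif_pos x.2, hvInt]; rfl)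
                rw [this, hz]; ring
        exact_mod_cast this
      -- the small coefficient at istar
      have hsmall : munew istar.1 < dstar := by
        have hlamstar : lamext istar.1 = lam istar := by
          rw [hlamext]; simp only [dif_pos istar.2]; rfl
        have hcast : (dstar : ℤ) = -(lam istar) := Int.toNat_of_nonneg (by omega)
        have hlameq : lam istar = -(dstar:ℤ) := by linarith
        have h1 : (munew istar.1 : ℤ) = (μ istar.1 : ℤ) - (t:ℤ) * (dstar:ℤ) := by
          rw [hmunewc istar.1 istar.2, hlamstar, hlameq]; ring
        have htd : t = μ istar.1 / dstar := rfl
        have h2 := Nat.div_add_mod (μ istar.1) dstar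
        have h3 : μ istar.1 % dstar < dstar := Nat.mod_lt _ hdstarpos
        have h4 : (munew istar.1 : ℤ) = ((μ istar.1 % dstar : ℕ) : ℤ) := by
          have h2' : (dstar:ℤ) * ((μ istar.1 / dstar : ℕ):ℤ) + ((μ istar.1 % dstar : ℕ):ℤ)
              = (μ istar.1:ℤ) := by exact_mod_cast h2
          have hcomm : ((μ istar.1 / dstar : ℕ):ℤ) * (dstar:ℤ)
              = (dstar:ℤ) * ((μ istar.1 / dstar : ℕ):ℤ) := mul_comm _ _
          rw [h1, htd]
          linarith
        have h5 : munew istar.1 = μ istar.1 % dstar := by exact_mod_cast h4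
        omega
      -- recurse on F.erase istar.1
      set cstar := istar.1 with hcstar
      set F' := F.erase cstar with hF'
      have hFcard' : F'.card ≤ s := by
        rw [hF', Finset.card_erase_of_mem istar.2]
        omega
      obtain ⟨μ'', k, dd, ν, hddmem, hli, hkm, hbd'', heq''⟩ :=
        ih F' hFcard' (fun c hc i => hbox c (Finset.mem_of_mem_erase hc) i) munew
      refine ⟨Function.update μ'' cstar (munew cstar), k, dd, ν,
        fun j => Finset.mem_of_mem_erase (hddmem j), hli, hkm, ?_, ?_⟩
      · intro c
        rcases eq_or_ne c cstar with h | h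
        · subst h
          rw [Function.update_self]
          omega
        · rw [Function.update_of_ne h]
          exact le_trans (hbd'' c) (betaFn_monoS m n (by omega))
      · intro i
        have hs1 : (∑ c ∈ F, Function.update μ'' cstar (munew cstar) c * c i)
            = (∑ c ∈ F', μ'' c * c i) + munew cstar * cstar i := by
          rw [← Finset.sum_erase_add F _ istar.2]
          congr 1
          · exact Finset.sum_congr rfl (fun c hc => by
              rw [Function.update_of_ne (Finset.ne_of_mem_erase hc)])
          · rw [Function.update_self]
        have hs2 : (∑ c ∈ F, munew c * c i)
            = (∑ c ∈ F', munew c * c i) + munew cstar * cstar i := by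
          rw [← Finset.sum_erase_add F _ istar.2]
        rw [← hpreserve i, hs2, hs1, heq'' i]
        ring
    · -- independent case
      push_neg at hind
      set k := F.card with hk
      set e := F.equivFin with he
      refine ⟨0, k, fun j => (e.symm j).1, fun j => μ (e.symm j).1,
        fun j => (e.symm j).2, ?_, ?_, fun c => Nat.zero_le _, ?_⟩
      · -- linear independence
        intro c hc j
        have hrel : ∀ jj, ∑ x : ι, c (e x) * vInt x jj = 0 := by
          intro jj
          rw [← Equiv.sum_comp e.symm (fun x => c (e x) * vInt x jj)]
          simp only [Equiv.apply_symm_apply]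
          simpa [hvInt] using hc jj
        have h2 := hind (fun x => c (e x)) hrel (e.symm j)
        simpa using h2
      · -- k ≤ m
        have li : LinearIndependent ℤ vInt := by
          rw [Fintype.linearIndependent_iff]
          intro g hg x
          refine hind g (fun jj => ?_) x
          have := congrFun hg jj
          rw [Finset.sum_apply] at this
          simpa [hvInt] using this
        have h1 : Fintype.card ι ≤ Module.finrank ℤ (Fin m → ℤ) := li.fintype_card_le_finrank
        have h2 : Module.finrank ℤ (Fin m → ℤ) = m := by rw [Module.finrank_pi]; simp
        have h3 : Fintype.card ι = F.card := Fintype.card_coe F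
        omega
      · intro i
        rw [hsubFN (fun c => μ c * c i)]
        rw [← Equiv.sum_comp e.symm (fun x => μ x.1 * x.1 i)]
        simp
        rfl

open List

variable {α σ : Type}

inductive NWalk (A : NFA α σ) : σ → σ → List α → List σ → Prop
  | nil (q : σ) : NWalk A q q [] [q]
  | cons {q p r : σ} {a : α} {w : List α} {ts : List σ} :
      p ∈ A.step q a → NWalk A p r w ts → NWalk A q r (a :: w) (q :: ts)

namespace NWalk

variable {A : NFA α σ} {q r : σ} {w : List α} {ts : List σ}

lemma head_eq (h : NWalk A q r w ts) : ∃ t', ts = q :: t' := by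
  cases h with
  | nil => exact ⟨[], rfl⟩
  | cons _ hw => exact ⟨_, rfl⟩

lemma length_eq (h : NWalk A q r w ts) : ts.length = w.length + 1 := by
  induction h with
  | nil => rfl
  | cons _ _ ih => simp [ih]

lemma ne_nil (h : NWalk A q r w ts) : ts ≠ [] := by
  intro hts
  have := h.length_eq
  rw [hts] at this
  simp at this

lemma getLast_eq (h : NWalk A q r w ts) : ts.getLast? = some r := by
  induction h with
  | nil => rfl
  | cons _ hw ih =>
    rw [List.getLast?_cons, ih]
    rfl

lemma nil_inv (h : NWalk A q r [] ts) : q = r ∧ ts = [q] := by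
  cases h; exact ⟨rfl, rfl⟩

lemma cons_inv {a : α} (h : NWalk A q r (a :: w) ts) :
    ∃ p ts', p ∈ A.step q a ∧ NWalk A p r w ts' ∧ ts = q :: ts' := by
  cases h with
  | cons hstep hw => exact ⟨_, _, hstep, hw, rfl⟩

lemma append {mid : σ} {w₁ w₂ : List α} {t₁ t₂ : List σ}
    (h₁ : NWalk A q mid w₁ t₁) (h₂ : NWalk A mid r w₂ t₂) :
    NWalk A q r (w₁ ++ w₂) (t₁.dropLast ++ t₂) := by
  induction h₁ with
  | nil q =>
    simpa using h₂
  | cons hstep hw ih =>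
    rw [List.dropLast_cons_of_ne_nil hw.ne_nil]
    exact NWalk.cons hstep (ih h₂)

lemma append' [DecidableEq σ] {mid : σ} {w₁ w₂ : List α} {t₁ t₂ : List σ}
    (h₁ : NWalk A q mid w₁ t₁) (h₂ : NWalk A mid r w₂ t₂) :
    ∃ t, NWalk A q r (w₁ ++ w₂) t ∧ t.toFinset = t₁.toFinset ∪ t₂.toFinset := by
  refine ⟨t₁.dropLast ++ t₂, h₁.append h₂, ?_⟩
  have hlast : t₁.getLast h₁.ne_nil = mid := by
    have := h₁.getLast_eq
    rw [List.getLast?_eq_getLast h₁.ne_nil] at this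
    exact Option.some_injective _ this
  have hdec : t₁.dropLast ++ [mid] = t₁ := by
    rw [← hlast]; exact List.dropLast_append_getLast h₁.ne_nil
  have hmid : mid ∈ t₂ := by
    obtain ⟨t', ht'⟩ := h₂.head_eq
    rw [ht']; exact List.mem_cons_self
  ext x
  simp only [List.mem_toFinset, Finset.mem_union, List.mem_append]
  constructor
  · rintro (hx | hx)
    · exact Or.inl ((List.dropLast_sublist _).subset hx)
    · exact Or.inr hx
  · rintro (hx | hx)
    · rw [← hdec] at hx
      rcases List.mem_append.1 hx with hx | hx
      · exact Or.inl hx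
      · simp only [List.mem_singleton] at hx
        exact Or.inr (hx ▸ hmid)
    · exact Or.inr hx

lemma split (h : NWalk A q r w ts) :
    ∀ i, i ≤ w.length → ∃ mid, NWalk A q mid (w.take i) (ts.take (i+1)) ∧
      NWalk A mid r (w.drop i) (ts.drop i) := by
  induction h with
  | nil q =>
    intro i hi
    have hi0 : i = 0 := Nat.le_zero.1 (by simpa using hi)
    subst hi0
    exact ⟨q, NWalk.nil q, NWalk.nil q⟩
  | @cons q p r a w ts hstep hw ih =>
    intro i hi
    cases i with
    | zero => exact ⟨q, NWalk.nil q, NWalk.cons hstep hw⟩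
    | succ i' =>
      obtain ⟨mid, h1, h2⟩ := ih i' (by simpa using hi)
      exact ⟨mid, NWalk.cons hstep h1, h2⟩

lemma drop_head (h : NWalk A q r w ts) {i : ℕ} (hi : i ≤ w.length)
    {mid : σ} (hmid : NWalk A mid r (w.drop i) (ts.drop i)) (hlt : i < ts.length) :
    mid = ts[i] := by
  obtain ⟨t', ht'⟩ := hmid.head_eq
  have h1 : (ts.drop i).head? = some mid := by rw [ht']; rfl
  rw [List.head?_drop] at h1
  rw [List.getElem?_eq_getElem hlt] at h1
  exact (Option.some_injective _ h1).symm

end NWalk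

lemma nfa_evalFrom_walk (A : NFA α σ) :
    ∀ (w : List α) (S : Set σ) (r : σ),
      r ∈ A.evalFrom S w ↔ ∃ q ∈ S, ∃ ts, NWalk A q r w ts := by
  intro w
  induction w with
  | nil =>
    intro S r
    rw [NFA.evalFrom_nil]
    constructor
    · intro h; exact ⟨r, h, [r], NWalk.nil r⟩
    · rintro ⟨q, hq, ts, hw⟩
      obtain ⟨rfl, -⟩ := hw.nil_inv
      exact hq
  | cons a w ih =>
    intro S r
    have hstep : A.evalFrom S (a :: w) = A.evalFrom (A.stepSet S a) w := rfl
    rw [hstep, ih]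
    constructor
    · rintro ⟨q', hq', ts, hw⟩
      rw [NFA.mem_stepSet] at hq'
      obtain ⟨q, hq, hstep⟩ := hq'
      exact ⟨q, hq, q :: ts, NWalk.cons hstep hw⟩
    · rintro ⟨q, hq, ts, hw⟩
      obtain ⟨p, ts', hstep, hw', rfl⟩ := hw.cons_inv
      exact ⟨p, NFA.mem_stepSet.2 ⟨q, hq, hstep⟩, ts', hw'⟩

lemma nfa_accepts_iff_walk (A : NFA α σ) (x : List α) :
    x ∈ A.accepts ↔ ∃ q₀ qf ts, q₀ ∈ A.start ∧ qf ∈ A.accept ∧ NWalk A q₀ qf x ts := by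
  rw [NFA.mem_accepts]
  constructor
  · rintro ⟨qf, hqf, hev⟩
    obtain ⟨q₀, hq₀, ts, hw⟩ := (nfa_evalFrom_walk A x A.start qf).1 hev
    exact ⟨q₀, qf, ts, hq₀, hqf, hw⟩
  · rintro ⟨q₀, qf, ts, hq₀, hqf, hw⟩
    exact ⟨qf, hqf, (nfa_evalFrom_walk A x A.start qf).2 ⟨q₀, hq₀, ts, hw⟩⟩

lemma list_indexOf_le [DecidableEq σ] :
    ∀ (l : List σ) (p : ℕ) (s : σ) (hp : p < l.length), l[p] = s → l.idxOf s ≤ p := by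
  intro l
  induction l with
  | nil => intro p s hp; simp at hp
  | cons x l ihl =>
    intro p s hp hps
    cases p with
    | zero =>
      simp only [List.getElem_cons_zero] at hps
      subst hps
      simp [List.idxOf_cons]
    | succ p' =>
      rcases eq_or_ne x s with hxs | hxs
      · subst hxs; simp [List.idxOf_cons]
      · have hp' : p' < l.length := by simpa using hp
        have h1 : l[p'] = s := by
          rw [← hps]; simp
        have h2 := ihl p' s (by simpa using hp) h1
        simp [List.idxOf_cons, hxs]
        omega

section Removal

variable [Fintype σ] [DecidableEq σ] [DecidableEq α] {A : NFA α σ} {q r : σ}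
  {w : List α} {ts : List σ}

lemma mem_take_toFinset {p : ℕ} {i : ℕ} (hp : p < ts.length) (hpi : p < i)
    (hi : i ≤ ts.length) : ts[p] ∈ (ts.take i).toFinset := by
  rw [List.mem_toFinset]
  have hlen : p < (ts.take i).length := by simp; omega
  have : (ts.take i)[p] = ts[p] := List.getElem_take
  rw [← this]
  exact List.getElem_mem hlen

lemma mem_drop_toFinset {p j : ℕ} (hp : p < ts.length) (hjp : j ≤ p) :
    ts[p] ∈ (ts.drop j).toFinset := by
  rw [List.mem_toFinset]
  have hlen : p - j < (ts.drop j).length := by simp; omega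
  refine List.mem_iff_getElem.2 ⟨p - j, hlen, ?_⟩
  rw [List.getElem_drop]
  congr 1
  omega

lemma removal (hw : NWalk A q r w ts)
    (hlen : (Fintype.card σ + 1) * (Fintype.card σ + 1) ≤ w.length) :
    ∃ (w' : List α) (ts' : List σ) (c : List α) (p : σ) (tc : List σ), NWalk A q r w' ts' ∧ ts'.toFinset = ts.toFinset ∧
      NWalk A p p c tc ∧ p ∈ ts.toFinset ∧ 1 ≤ c.length ∧ c.length ≤ Fintype.card σ ∧
      w'.length < w.length ∧ ∀ x : α, w.count x = w'.count x + c.count x := by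
  set n := Fintype.card σ with hn
  set L := w.length with hL
  have hts : ts.length = L + 1 := hw.length_eq
  set φ : ℕ → ℕ := fun p => ((ts.toFinset).filter (fun s => ts.idxOf s ≤ p)).card with hφ
  have hφmono : ∀ p p', p ≤ p' → φ p ≤ φ p' := by
    intro p p' hpp
    refine Finset.card_le_card (fun s hs => ?_)
    simp only [Finset.mem_filter] at hs ⊢
    exact ⟨hs.1, le_trans hs.2 hpp⟩
  have hφle : ∀ p, φ p ≤ n :=
    fun p => le_trans (Finset.card_le_card (Finset.filter_subset _ _)) (Finset.card_le_univ _)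
  obtain ⟨y, hy, hfiber⟩ := Finset.exists_lt_card_fiber_of_mul_lt_card_of_maps_to
    (s := Finset.range (L+1)) (t := Finset.range (n+1)) (f := φ)
    (n := n+1)
    (fun p _ => Finset.mem_range.2 (Nat.lt_succ_of_le (hφle p)))
    (by simp only [Finset.card_range]; omega)
  set fib := (Finset.range (L+1)).filter (fun p => φ p = y) with hfib
  have hfibne : fib.Nonempty := Finset.card_pos.1 (by omega)
  set a := fib.min' hfibne with ha
  set b := fib.max' hfibne with hb
  have hab : fib ⊆ Finset.Icc a b :=
    fun p hp => Finset.mem_Icc.2 ⟨Finset.min'_le _ _ hp, Finset.le_max' _ _ hp⟩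
  have hcard : fib.card ≤ b + 1 - a := by
    rw [← Nat.card_Icc]; exact Finset.card_le_card hab
  have hbL : b ≤ L := by
    have hbm := (Finset.mem_filter.1 (fib.max'_mem hfibne)).1
    rw [Finset.mem_range] at hbm
    omega
  have haφ : φ a = y := (Finset.mem_filter.1 (fib.min'_mem hfibne)).2
  have hbφ : φ b = y := (Finset.mem_filter.1 (fib.max'_mem hfibne)).2
  have hblow : a + n + 1 ≤ b := by omega
  have hconst : ∀ p, a ≤ p → p ≤ b → φ p = y := fun p h1 h2 =>
    le_antisymm (hbφ ▸ hφmono p b h2) (haφ ▸ hφmono a p h1)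
  obtain ⟨i0, hi0, j0, hj0, hij0, heq0⟩ := Finset.exists_ne_map_eq_of_card_lt_of_maps_to
    (s := Finset.Icc a (a+n)) (t := (Finset.univ : Finset σ))
    (by rw [Nat.card_Icc, Finset.card_univ]; omega)
    (f := fun p => ts.getD p q) (fun p _ => Finset.mem_univ _)
  obtain ⟨i, j, hij, hiIcc, hjIcc, heqij'⟩ : ∃ i j, i < j ∧ i ∈ Finset.Icc a (a+n) ∧
      j ∈ Finset.Icc a (a+n) ∧ ts.getD i q = ts.getD j q := by
    rcases lt_or_gt_of_ne hij0 with h | h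
    · exact ⟨i0, j0, h, hi0, hj0, heq0⟩
    · exact ⟨j0, i0, h, hj0, hi0, heq0.symm⟩
  rw [Finset.mem_Icc] at hiIcc hjIcc
  have hjL : j < L := by omega
  have hilt : i < ts.length := by omega
  have hjlt : j < ts.length := by omega
  have heqij : ts[i]'hilt = ts[j]'hjlt := by
    rw [← List.getD_eq_getElem ts q hilt, ← List.getD_eq_getElem ts q hjlt]
    exact heqij'
  have hclaim : ∀ p (hp : p < ts.length), i < p → p ≤ j → ts.idxOf (ts[p]) ≤ i := by
    intro p hp hip hpj
    have hsmem : ts[p] ∈ ts.toFinset := List.mem_toFinset.2 (List.getElem_mem hp)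
    have hidxp : ts.idxOf (ts[p]) ≤ p := list_indexOf_le ts p _ hp rfl
    have hφp : φ p = φ i := by
      rw [hconst p (by omega) (by omega), hconst i (by omega) (by omega)]
    have hsub : (ts.toFinset.filter (fun s => ts.idxOf s ≤ i)) ⊆
        (ts.toFinset.filter (fun s => ts.idxOf s ≤ p)) := by
      intro s hs
      simp only [Finset.mem_filter] at hs ⊢
      exact ⟨hs.1, by omega⟩
    have hsets := Finset.eq_of_subset_of_card_le hsub (le_of_eq hφp)
    have hmemp : ts[p] ∈ ts.toFinset.filter (fun s => ts.idxOf s ≤ p) :=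
      Finset.mem_filter.2 ⟨hsmem, hidxp⟩
    rw [← hsets] at hmemp
    exact (Finset.mem_filter.1 hmemp).2
  -- split the walk
  obtain ⟨mid₁, W1, W2⟩ := hw.split i (by omega)
  have hmid₁ : mid₁ = ts[i]'hilt := hw.drop_head (by omega) W2 (by omega)
  have hdroplen : (w.drop i).length = L - i := by simp [hL]
  obtain ⟨mid₂, W3, W4⟩ := W2.split (j - i) (by rw [hdroplen]; omega)
  have hdd : (ts.drop i).drop (j-i) = ts.drop j := by
    rw [List.drop_drop]; congr 1; omega
  have hwd : (w.drop i).drop (j-i) = w.drop j := by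
    rw [List.drop_drop]; congr 1; omega
  rw [hdd, hwd] at W4
  have hmid₂ : mid₂ = ts[j]'hjlt := hw.drop_head (by omega) W4 (by omega)
  have hmm : mid₂ = mid₁ := by rw [hmid₂, hmid₁, heqij]
  rw [hmm] at W4 W3
  obtain ⟨t', hwalk', htf'⟩ := W1.append' W4
  refine ⟨w.take i ++ w.drop j, t', (w.drop i).take (j-i), mid₁,
    (ts.drop i).take (j-i+1), hwalk', ?_, W3, ?_, ?_, ?_, ?_, ?_⟩
  · -- trace set preserved
    rw [htf']
    ext x
    constructor
    · intro hx
      rcases Finset.mem_union.1 hx with hx | hx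
      · exact List.mem_toFinset.2 (List.take_subset _ _ (List.mem_toFinset.1 hx))
      · exact List.mem_toFinset.2 (List.drop_subset _ _ (List.mem_toFinset.1 hx))
    · intro hx
      obtain ⟨p, hp, hxp⟩ := List.mem_iff_getElem.1 (List.mem_toFinset.1 hx)
      rcases le_or_gt p i with hpi | hpi
      · exact Finset.mem_union_left _ (hxp ▸ mem_take_toFinset hp (by omega) (by omega))
      · rcases le_or_gt j p with hjp | hjp
        · exact Finset.mem_union_right _ (hxp ▸ mem_drop_toFinset hp hjp)
        · have hidx := hclaim p hp hpi (by omega)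
          rw [hxp] at hidx
          have hxin : x ∈ ts := List.mem_toFinset.1 hx
          have hidxlt : ts.idxOf x < ts.length := List.idxOf_lt_length_iff.2 hxin
          have hgetidx : ts[ts.idxOf x] = x := List.getElem_idxOf hidxlt
          exact Finset.mem_union_left _ (hgetidx ▸ mem_take_toFinset hidxlt (by omega) (by omega))
  · exact hmid₁ ▸ List.mem_toFinset.2 (List.getElem_mem hilt)
  · rw [List.length_take]
    omega
  · rw [List.length_take, hdroplen]
    omega
  · rw [List.length_append, List.length_take, List.length_drop]
    omega
  · intro x
    have hsplit2 : (w.drop i) = (w.drop i).take (j-i) ++ w.drop j := by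
      rw [← hwd]; exact (List.take_append_drop _ _).symm
    conv_lhs => rw [← List.take_append_drop i w, List.count_append, hsplit2,
      List.count_append]
    rw [List.count_append]
    ring

lemma reduction : ∀ (fuel : ℕ) {q r : σ} {w : List α} {ts : List σ},
    w.length ≤ fuel → NWalk A q r w ts →
    ∃ (w₀ : List α) (ts₀ : List σ) (cs : List (List α)), NWalk A q r w₀ ts₀ ∧
      w₀.length ≤ (Fintype.card σ + 1) * (Fintype.card σ + 1) ∧
      ts₀.toFinset = ts.toFinset ∧
      (∀ c ∈ cs, 1 ≤ c.length ∧ c.length ≤ Fintype.card σ ∧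
        ∃ p ∈ ts.toFinset, ∃ tc, NWalk A p p c tc) ∧
      (∀ x : α, w.count x = w₀.count x + (cs.map (fun c => c.count x)).sum) := by
  intro fuel
  induction fuel with
  | zero =>
    intro q r w ts hfuel hw
    exact ⟨w, ts, [], hw, by omega, rfl, by simp, by simp⟩
  | succ fuel ih =>
    intro q r w ts hfuel hw
    by_cases hsmall : w.length ≤ (Fintype.card σ + 1) * (Fintype.card σ + 1)
    · exact ⟨w, ts, [], hw, hsmall, rfl, by simp, by simp⟩
    · obtain ⟨w', ts', c, p, tc, hw', htf', hc, hp, hc1, hc2, hlen', hcount⟩ :=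
        removal hw (by omega)
      obtain ⟨w₀, ts₀, cs, hw₀, hlen₀, htf₀, hcs, hcount₀⟩ := ih (by omega) hw'
      refine ⟨w₀, ts₀, c :: cs, hw₀, hlen₀, htf₀.trans htf', ?_, ?_⟩
      · intro c' hc'
        rcases List.mem_cons.1 hc' with hc'' | hc''
        · subst hc''; exact ⟨hc1, hc2, p, hp, tc, hc⟩
        · obtain ⟨h1, h2, p', hp', tc', hw''⟩ := hcs c' hc''
          exact ⟨h1, h2, p', htf' ▸ hp', tc', hw''⟩
      · intro x
        rw [hcount x, hcount₀ x]
        simp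
        ring

lemma insertion_one (hw : NWalk A q r w ts) {p : σ} (hp : p ∈ ts.toFinset)
    {c : List α} {tc : List σ} (hc : NWalk A p p c tc) :
    ∃ (w' : List α) (ts' : List σ), NWalk A q r w' ts' ∧ ts.toFinset ⊆ ts'.toFinset ∧
      ∀ x, w'.count x = w.count x + c.count x := by
  obtain ⟨pos, hpos, hxp⟩ := List.mem_iff_getElem.1 (List.mem_toFinset.1 hp)
  have hts : ts.length = w.length + 1 := hw.length_eq
  have hposw : pos ≤ w.length := by omega
  obtain ⟨mid, W1, W2⟩ := hw.split pos hposw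
  have hmid : mid = p := by rw [hw.drop_head hposw W2 (by omega), hxp]
  rw [hmid] at W1 W2
  obtain ⟨t1, H1, htf1⟩ := W1.append' hc
  obtain ⟨t2, H2, htf2⟩ := H1.append' W2
  refine ⟨_, t2, H2, ?_, ?_⟩
  · intro x hx
    rw [htf2, htf1]
    obtain ⟨pp, hpp, hxx⟩ := List.mem_iff_getElem.1 (List.mem_toFinset.1 hx)
    rcases le_or_gt pp pos with hcase | hcase
    · exact Finset.mem_union_left _ (Finset.mem_union_left _
        (hxx ▸ mem_take_toFinset hpp (by omega) (by omega)))
    · exact Finset.mem_union_right _ (hxx ▸ mem_drop_toFinset hpp (by omega))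
  · intro x
    rw [List.count_append, List.count_append]
    conv_rhs => rw [← List.take_append_drop pos w, List.count_append]
    ring

lemma insertion_many : ∀ (cs : List (List α)) {q r : σ} {w : List α} {ts : List σ},
    NWalk A q r w ts →
    (∀ c ∈ cs, ∃ p ∈ ts.toFinset, ∃ tc, NWalk A p p c tc) →
    ∃ (w' : List α) (ts' : List σ), NWalk A q r w' ts' ∧ ts.toFinset ⊆ ts'.toFinset ∧
      ∀ x, w'.count x = w.count x + (cs.map (fun c => c.count x)).sum := by
  intro cs
  induction cs with
  | nil =>
    intro q r w ts hw _
    exact ⟨w, ts, hw, le_refl _, by simp⟩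
  | cons c cs ihc =>
    intro q r w ts hw hcs
    obtain ⟨p, hp, tc, hc⟩ := hcs c (List.mem_cons_self)
    obtain ⟨w₁, ts₁, hw₁, hsub₁, hcount₁⟩ := insertion_one hw hp hc
    obtain ⟨w', ts', hw', hsub', hcount'⟩ := ihc hw₁ (fun c' hc' => by
      obtain ⟨p', hp', tc', hw''⟩ := hcs c' (List.mem_cons_of_mem _ hc')
      exact ⟨p', hsub₁ hp', tc', hw''⟩)
    refine ⟨w', ts', hw', le_trans hsub₁ hsub', fun x => ?_⟩
    rw [hcount' x, hcount₁ x]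
    simp
    ring

end Removal

open Polynomial in
lemma poly_eval_mono (p : Polynomial ℕ) : Monotone fun x => p.eval x := by
  induction p using Polynomial.induction_on' with
  | add p q hp hq => simpa [Polynomial.eval_add] using hp.add hq
  | monomial k a =>
    intro x y h
    simp only [Polynomial.eval_monomial]
    exact Nat.mul_le_mul_left a (Nat.pow_le_pow_left h k)

open Polynomial in
lemma betaFn_polybnd (d : ℕ) : ∃ q : Polynomial ℕ, ∀ N s, betaFn d N s ≤ q.eval (N + s) := by
  induction d with
  | zero => exact ⟨1, fun N s => by simp [betaFn]⟩
  | succ d ih =>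
    obtain ⟨q, hq⟩ := ih
    refine ⟨(X+1)^2 * (q.comp (C 2 * X^2 + X + 1)), fun N s => ?_⟩
    have h1 : betaFn (d+1) N s = (s+1) * (N+1) * betaFn d (2*N*N + N + 1) s := rfl
    have h2 : betaFn d (2*N*N + N + 1) s ≤ q.eval ((2*N*N + N + 1) + s) := hq _ s
    have h3 : q.eval ((2*N*N + N + 1) + s) ≤ q.eval (2*(N+s)*(N+s) + (N+s) + 1) :=
      poly_eval_mono q (by nlinarith)
    have h4 : ((X+1)^2 * (q.comp (C 2 * X^2 + X + 1)) : Polynomial ℕ).eval (N + s)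
        = (N+s+1)^2 * q.eval (2*(N+s)*(N+s) + (N+s) + 1) := by
      simp [Polynomial.eval_comp]
      ring_nf
    rw [h1, h4]
    have h5 : (s+1) * (N+1) ≤ (N+s+1)^2 := by nlinarith
    calc (s+1) * (N+1) * betaFn d (2*N*N + N + 1) s
        ≤ (N+s+1)^2 * (q.eval (2*(N+s)*(N+s) + (N+s) + 1)) :=
          Nat.mul_le_mul h5 (le_trans h2 h3)
    _ = _ := rfl

def P0fn (m n : ℕ) : ℕ := (n+1)*(n+1) + (n+1)^m * betaFn m n ((n+1)^m) * n

open Polynomial in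
lemma exists_good_poly (m : ℕ) : ∃ p : Polynomial ℕ, ∀ n,
    P0fn m n ≤ p.eval n ∧ (P0fn m n + 1)^m * ((m+1) * ((n+1)^m)^m) ≤ p.eval n := by
  obtain ⟨q, hq⟩ := betaFn_polybnd m
  set B0poly : Polynomial ℕ := q.comp (X + (X+1)^m) with hB0
  set P0poly : Polynomial ℕ := (X+1)^2 + (X+1)^m * B0poly * X with hP0
  set CNTpoly : Polynomial ℕ := (P0poly + 1)^m * (C (m+1) * (X+1)^(m*m)) with hCNT
  have hB0n : ∀ n, betaFn m n ((n+1)^m) ≤ B0poly.eval n := by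
    intro n
    have : B0poly.eval n = q.eval (n + (n+1)^m) := by
      simp [hB0, Polynomial.eval_comp]
    rw [this]
    exact hq n ((n+1)^m)
  have hP0n : ∀ n, P0fn m n ≤ P0poly.eval n := by
    intro n
    have heval : P0poly.eval n = (n+1)^2 + (n+1)^m * B0poly.eval n * n := by
      simp [hP0]
    rw [heval, P0fn]
    have := hB0n n
    have h1 : (n+1)^m * betaFn m n ((n+1)^m) * n ≤ (n+1)^m * B0poly.eval n * n :=
      Nat.mul_le_mul_right n (Nat.mul_le_mul_left _ this)
    have h2 : (n+1)*(n+1) = (n+1)^2 := by ring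
    omega
  refine ⟨P0poly + CNTpoly, fun n => ⟨?_, ?_⟩⟩
  · rw [Polynomial.eval_add]
    exact le_trans (hP0n n) (Nat.le_add_right _ _)
  · rw [Polynomial.eval_add]
    have hc : CNTpoly.eval n = (P0poly.eval n + 1)^m * ((m+1) * (n+1)^(m*m)) := by
      simp [hCNT]
    have hpow : (n+1)^(m*m) = ((n+1)^m)^m := by rw [pow_mul]
    have h1 : (P0fn m n + 1)^m ≤ (P0poly.eval n + 1)^m :=
      Nat.pow_le_pow_left (by have := hP0n n; omega) m
    have h2 : (P0fn m n + 1)^m * ((m+1) * ((n+1)^m)^m)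
        ≤ (P0poly.eval n + 1)^m * ((m+1) * ((n+1)^m)^m) :=
      Nat.mul_le_mul_right _ h1
    rw [hc, hpow]
    omega

lemma list_sum_apply {m : ℕ} : ∀ (L : List (Fin m → ℕ)) (i : Fin m),
    L.sum i = (L.map (fun v => v i)).sum := by
  intro L i
  induction L with
  | nil => rfl
  | cons v L ih => simp [ih]

lemma repl_pairs_sum {γ : Type} (f : List γ → ℕ) :
    ∀ (pairs : List (ℕ × List γ)),
      (((pairs.map (fun pr => List.replicate pr.1 pr.2)).flatten).map f).sum
        = (pairs.map (fun pr => pr.1 * f pr.2)).sum := by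
  intro pairs
  induction pairs with
  | nil => rfl
  | cons pr pairs ih =>
    simp only [List.map_cons, List.flatten_cons, List.map_append, List.sum_append, ih]
    congr 1
    rw [List.map_replicate, List.sum_replicate]
    simp

lemma mem_repl_pairs {γ : Type} {c : List γ} {pairs : List (ℕ × List γ)}
    (hc : c ∈ (pairs.map (fun pr => List.replicate pr.1 pr.2)).flatten) :
    ∃ pr ∈ pairs, c = pr.2 := by
  rw [List.mem_flatten] at hc
  obtain ⟨blk, hblk, hcblk⟩ := hc
  rw [List.mem_map] at hblk
  obtain ⟨pr, hpr, rfl⟩ := hblk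
  exact ⟨pr, hpr, List.eq_of_mem_replicate hcblk⟩

/-- For every `m ≥ 1` there is a polynomial `p` such that for every
`n`-state NFA `A` over an alphabet of `m` letters, the Parikh image `ψ(L(A))` can be
written as `Y ∪ ⋃_{i ∈ I} Z_i` where `Y` is a finite set of vectors with components
bounded by `p(n)`, `|I| ≤ p(n)`, and each `Z_i` is a linear set with at most `m`
generators which are linearly independent vectors from `{0,…,n}^m`, and whose
offset has components bounded by `p(n)`. -/
theorem nfa_parikh_semilinear_representation (m : ℕ) (hm : 1 ≤ m) :
    ∃ p : Polynomial ℕ,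
      ∀ (σ : Type) [Fintype σ], ∀ n : ℕ, Fintype.card σ = n →
      ∀ A : NFA (Fin m) σ,
      ∃ (Y : Set (Fin m → ℕ)) (I : Finset ℕ) (k : ℕ → ℕ)
        (v₀ : ℕ → (Fin m → ℕ)) (vs : (i : ℕ) → Fin (k i) → (Fin m → ℕ)),
        Y.Finite ∧
        (∀ y ∈ Y, ∀ j, y j ≤ p.eval n) ∧
        I.card ≤ p.eval n ∧
        (∀ i ∈ I,
          k i ≤ m ∧
          (∀ j, v₀ i j ≤ p.eval n) ∧
          (∀ a b, vs i a b ≤ n) ∧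
          LinIndepZ (vs i)) ∧
        parikhImage A.accepts = Y ∪ ⋃ i ∈ I, linSet (v₀ i) (vs i) := by
  obtain ⟨p, hp⟩ := exists_good_poly m
  refine ⟨p, ?_⟩
  intro σ _ n hcard A
  classical
  set S : Set (Fin m → ℕ) := parikhImage A.accepts with hS
  set P0n := P0fn m n with hP0n
  set B0n := betaFn m n ((n+1)^m) with hB0n
  set boxOff : Finset (Fin m → ℕ) := Fintype.piFinset (fun _ => Finset.range (P0n + 1)) with hboxOff
  set boxGen : Finset (Fin m → ℕ) := Fintype.piFinset (fun _ => Finset.range (n + 1)) with hboxGen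
  have hoff : boxOff.card = (P0n+1)^m := by
    rw [hboxOff, Fintype.card_piFinset]
    simp [Finset.card_range]
  have hgen : boxGen.card = (n+1)^m := by
    rw [hboxGen, Fintype.card_piFinset]
    simp [Finset.card_range]
  set cand : Finset ((Fin m → ℕ) × Σ k : ℕ, (Fin k → Fin m → ℕ)) :=
    boxOff ×ˢ ((Finset.range (m+1)).sigma (fun k => Fintype.piFinset (fun _ : Fin k => boxGen)))
    with hcand
  set G := cand.filter (fun dt => LinIndepZ dt.2.2 ∧ linSet dt.1 dt.2.2 ⊆ S) with hG
  set dflt : (Fin m → ℕ) × Σ k : ℕ, (Fin k → Fin m → ℕ) := ⟨fun _ => 0, ⟨0, Fin.elim0⟩⟩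
    with hdflt
  set dat := fun i => G.toList.getD i dflt with hdat
  have hmemI : ∀ i ∈ Finset.range G.toList.length, dat i ∈ G := by
    intro i hi
    have hlt : i < G.toList.length := Finset.mem_range.1 hi
    rw [hdat]
    simp only
    rw [List.getD_eq_getElem _ _ hlt]
    exact Finset.mem_toList.1 (List.getElem_mem hlt)
  refine ⟨∅, Finset.range G.toList.length, fun i => (dat i).2.1, fun i => (dat i).1,
    fun i => (dat i).2.2, Set.finite_empty, by simp, ?_, ?_, ?_⟩
  · -- cardinality bound
    rw [Finset.card_range, Finset.length_toList]
    have h1 : G.card ≤ cand.card := Finset.card_filter_le _ _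
    have h2 : cand.card ≤ (P0n + 1)^m * ((m+1) * ((n+1)^m)^m) := by
      rw [hcand, Finset.card_product, Finset.card_sigma, hoff]
      have heach : ∀ kk ∈ Finset.range (m+1),
          (Fintype.piFinset (fun _ : Fin kk => boxGen)).card ≤ ((n+1)^m)^m := by
        intro kk hkk
        rw [Fintype.card_piFinset]
        simp only [hgen, Finset.prod_const, Finset.card_univ, Fintype.card_fin]
        exact Nat.pow_le_pow_right (Nat.one_le_pow _ _ (by omega))
          (by have := Finset.mem_range.1 hkk; omega)
      refine Nat.mul_le_mul_left _ ?_
      calc ∑ kk ∈ Finset.range (m+1), (Fintype.piFinset (fun _ : Fin kk => boxGen)).card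
          ≤ ∑ _kk ∈ Finset.range (m+1), ((n+1)^m)^m := Finset.sum_le_sum heach
      _ = (m+1) * ((n+1)^m)^m := by rw [Finset.sum_const, Finset.card_range, smul_eq_mul]
    calc G.card ≤ (P0n + 1)^m * ((m+1) * ((n+1)^m)^m) := le_trans h1 h2
    _ ≤ p.eval n := (hp n).2
  · -- properties of each linear set datum
    intro i hi
    have hG' := Finset.mem_filter.1 (hmemI i hi)
    have hcand' := Finset.mem_product.1 hG'.1
    have hsig := Finset.mem_sigma.1 hcand'.2
    refine ⟨?_, ?_, ?_, hG'.2.1⟩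
    · show (dat i).2.1 ≤ m
      have := Finset.mem_range.1 hsig.1
      omega
    · intro j
      show (dat i).1 j ≤ p.eval n
      have := Fintype.mem_piFinset.1 hcand'.1 j
      rw [Finset.mem_range] at this
      have hP := (hp n).1
      omega
    · intro a b
      show (dat i).2.2 a b ≤ n
      have h1 := Fintype.mem_piFinset.1 hsig.2 a
      have h2 := Fintype.mem_piFinset.1 h1 b
      rw [Finset.mem_range] at h2
      omega
  · -- the set equality
    rw [Set.empty_union]
    ext x
    simp only [Set.mem_iUnion]
    constructor
    · -- covering direction
      intro hx
      obtain ⟨w, hwacc, hwx⟩ := hx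
      obtain ⟨q₀, qf, ts, hq₀, hqf, hwalk⟩ := (nfa_accepts_iff_walk A w).1 hwacc
      obtain ⟨w₀, ts₀, cs, hw₀, hlen₀, htf₀, hcs, hcount⟩ :=
        reduction w.length (le_refl _) hwalk
      set F := (cs.map parikh).toFinset with hF
      set μ := fun v => (cs.map parikh).count v with hμ
      have hFbox : ∀ c ∈ F, ∀ i, c i ≤ n := by
        intro c hc i
        rw [hF, List.mem_toFinset, List.mem_map] at hc
        obtain ⟨c', hc', rfl⟩ := hc
        have hl := (hcs c' hc').2.1
        calc parikh c' i ≤ c'.length := List.count_le_length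
        _ ≤ Fintype.card σ := hl
        _ = n := hcard
      have hFsub : F ⊆ boxGen := by
        intro c hc
        rw [hboxGen, Fintype.mem_piFinset]
        intro b
        rw [Finset.mem_range]
        have := hFbox c hc b
        omega
      have hFcard : F.card ≤ (n+1)^m := by
        calc F.card ≤ boxGen.card := Finset.card_le_card hFsub
        _ = (n+1)^m := hgen
      obtain ⟨μ', k, dd, ν, hddF, hli, hkm, hμ'bd, hid⟩ :=
        arith_lemma m n ((n+1)^m) F hFcard hFbox μ
      have hconv : ∀ i, (cs.map (fun c => c.count i)).sum = ∑ c ∈ F, μ c * c i := by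
        intro i
        have h2 := congrFun (Finset.sum_list_count (cs.map parikh)) i
        rw [list_sum_apply, List.map_map] at h2
        rw [Finset.sum_apply] at h2
        simp only [Pi.smul_apply, smul_eq_mul] at h2
        exact h2
      have hxdec : ∀ i, x i = (parikh w₀ i + ∑ c ∈ F, μ' c * c i) + ∑ j, ν j * dd j i := by
        intro i
        rw [← hwx]
        show w.count i = _
        rw [hcount i, hconv i, hid i]
        simp only [parikh]
        ring
      obtain ⟨v0x, hv0x⟩ : ∃ v0x : Fin m → ℕ,
          v0x = fun i => parikh w₀ i + ∑ c ∈ F, μ' c * c i := ⟨_, rfl⟩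
      have hv0bd : ∀ i, v0x i ≤ P0n := by
        intro i
        have h1 : parikh w₀ i ≤ (n+1)*(n+1) := by
          have hcl : parikh w₀ i ≤ w₀.length := List.count_le_length
          rw [hcard] at hlen₀
          omega
        have h2 : ∑ c ∈ F, μ' c * c i ≤ (n+1)^m * (B0n * n) := by
          calc ∑ c ∈ F, μ' c * c i ≤ ∑ _c ∈ F, B0n * n :=
                Finset.sum_le_sum (fun c hc => Nat.mul_le_mul (hμ'bd c) (hFbox c hc i))
          _ = F.card * (B0n * n) := by rw [Finset.sum_const, smul_eq_mul]
          _ ≤ (n+1)^m * (B0n * n) := Nat.mul_le_mul_right _ hFcard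
        have h3 : (n+1)^m * (B0n * n) = (n+1)^m * betaFn m n ((n+1)^m) * n := by
          rw [hB0n]; ring
        have hP0eq : P0n = (n+1)*(n+1) + (n+1)^m * betaFn m n ((n+1)^m) * n := hP0n
        have hv0eq : v0x i = parikh w₀ i + ∑ c ∈ F, μ' c * c i := by rw [hv0x]
        linarith
      have hrep0 : ∀ v ∈ F, ∃ c ∈ cs, parikh c = v := by
        intro v hv
        rw [hF, List.mem_toFinset, List.mem_map] at hv
        exact hv
      set rep : (Fin m → ℕ) → List (Fin m) :=
        fun v => if h : ∃ c ∈ cs, parikh c = v then h.choose else [] with hrepdef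
      have hrepP : ∀ v ∈ F, rep v ∈ cs ∧ parikh (rep v) = v := by
        intro v hv
        have h := hrep0 v hv
        rw [hrepdef]
        simp only [dif_pos h]
        exact ⟨h.choose_spec.1, h.choose_spec.2⟩
      have hsubS : linSet v0x dd ⊆ S := by
        rintro z ⟨t, hz⟩
        set pairs : List (ℕ × List (Fin m)) :=
          (F.toList.map (fun v => (μ' v, rep v))) ++ (List.ofFn (fun j => (t j, rep (dd j))))
          with hpairs
        set cyc := (pairs.map (fun pr => List.replicate pr.1 pr.2)).flatten with hcyc
        have hcycP : ∀ c ∈ cyc, ∃ p' ∈ ts₀.toFinset, ∃ tc, NWalk A p' p' c tc := by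
          intro c hc
          obtain ⟨pr, hpr, rfl⟩ := mem_repl_pairs hc
          have hprF : ∃ v ∈ F, pr.2 = rep v := by
            rw [hpairs, List.mem_append] at hpr
            rcases hpr with h | h
            · rw [List.mem_map] at h
              obtain ⟨v, hv, rfl⟩ := h
              exact ⟨v, Finset.mem_toList.1 hv, rfl⟩
            · rw [List.mem_ofFn] at h
              obtain ⟨j, hj⟩ := h
              exact ⟨dd j, hddF j, by rw [← hj]⟩
          obtain ⟨v, hv, hprv⟩ := hprF
          obtain ⟨-, -, p', hp', tc, hcyc'⟩ := hcs (rep v) (hrepP v hv).1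
          exact ⟨p', htf₀.symm ▸ hp', tc, by rw [hprv]; exact hcyc'⟩
        obtain ⟨w', ts', hw', hsub', hcount'⟩ := insertion_many cyc hw₀ hcycP
        have hacc' : w' ∈ A.accepts :=
          (nfa_accepts_iff_walk A w').2 ⟨q₀, qf, ts', hq₀, hqf, hw'⟩
        refine ⟨w', hacc', ?_⟩
        funext i
        rw [hz]
        show w'.count i = v0x i + ∑ j, t j * dd j i
        rw [hcount' i]
        have hsum : (cyc.map (fun c => c.count i)).sum
            = (∑ v ∈ F, μ' v * v i) + ∑ j, t j * dd j i := by
          rw [hcyc, repl_pairs_sum, hpairs, List.map_append, List.sum_append]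
          congr 1
          · rw [List.map_map]
            have hcongr : ∀ v ∈ F.toList,
                ((fun pr : ℕ × List (Fin m) => pr.1 * (pr.2).count i)
                  ∘ (fun v => (μ' v, rep v))) v = μ' v * v i := by
              intro v hv
              simp only [Function.comp]
              congr 1
              have hpv := (hrepP v (Finset.mem_toList.1 hv)).2
              conv_rhs => rw [← hpv]
              rfl
            rw [List.map_congr_left hcongr]
            exact Finset.sum_map_toList F (fun v => μ' v * v i)
          · rw [List.map_ofFn, List.sum_ofFn]
            refine Finset.sum_congr rfl (fun j _ => ?_)
            simp only [Function.comp]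
            congr 1
            have hpdj := (hrepP (dd j) (hddF j)).2
            conv_rhs => rw [← hpdj]
            rfl
        rw [hsum]
        have hv0eq : v0x i = parikh w₀ i + ∑ c ∈ F, μ' c * c i := by rw [hv0x]
        rw [hv0eq]
        simp only [parikh]
        ring
      have hd0cand : (⟨v0x, ⟨k, dd⟩⟩ : (Fin m → ℕ) × Σ k : ℕ, (Fin k → Fin m → ℕ)) ∈ cand := by
        rw [hcand, Finset.mem_product]
        refine ⟨?_, ?_⟩
        · rw [hboxOff, Fintype.mem_piFinset]
          intro b
          rw [Finset.mem_range]
          exact Nat.lt_succ_of_le (hv0bd b)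
        · rw [Finset.mem_sigma]
          exact ⟨Finset.mem_range.2 (Nat.lt_succ_of_le hkm), by
            rw [Fintype.mem_piFinset]
            intro a
            exact hFsub (hddF a)⟩
      have hd0G : (⟨v0x, ⟨k, dd⟩⟩ : (Fin m → ℕ) × Σ k : ℕ, (Fin k → Fin m → ℕ)) ∈ G :=
        Finset.mem_filter.2 ⟨hd0cand, hli, hsubS⟩
      obtain ⟨idx, hidxlt, hidx⟩ := List.mem_iff_getElem.1 (Finset.mem_toList.2 hd0G)
      refine ⟨idx, Finset.mem_range.2 hidxlt, ?_⟩
      have hdatidx : dat idx = ⟨v0x, ⟨k, dd⟩⟩ := by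
        rw [hdat]
        simp only
        rw [List.getD_eq_getElem _ _ hidxlt]
        exact hidx
      show x ∈ linSet (dat idx).1 (dat idx).2.2
      rw [hdatidx]
      refine ⟨ν, funext (fun i => ?_)⟩
      show x i = v0x i + ∑ j, ν j * dd j i
      have hv0eq : v0x i = parikh w₀ i + ∑ c ∈ F, μ' c * c i := by rw [hv0x]
      rw [hv0eq]
      exact hxdec i
    · -- reverse inclusion
      rintro ⟨i, hi, hxin⟩
      have hG' := Finset.mem_filter.1 (hmemI i hi)
      exact hG'.2.2 hxin
end
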